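/- Let M = (S, A, s0, p, γ) be a finite discounted MDP without reward and π_E a stochastic policy with S_{M,π_E} = S and π_E(a|s) ≥ π_min' for all (s,a), for a given π_min' > 0. Let ε, δ ∈ (0,1) and H ≥ |S|. Let N i.i.d. trajectories of length H be generated by π_E in M starting at s0; let N(s,a) be the number of trajectories in which state s is visited and, at the first visit to s, action a is played, and N(s) := ∑_a N(s,a). Define π̂(a|s) := max{π_min', N(s,a)/max{1, N(s)}} and r̂(s,a) := log(π̂(a|s)/max_{a'} π̂(a'|s)) if N(s) > 0, and r̂(s,a) := log π_min' if N(s) = 0. If N ≥ 33·log²(8|S||A|/δ) / (ε²·π_min'·p^{min,H}_{M,π_E}), then with probability at least 1−δ, max_{(s,a)} |r̂(s,a) − log(π_E(a|s)/max_{a'} π_E(a'|s))| ≤ ε. -/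
import Mathlib


open scoped ENNReal

open scoped BigOperators
open MeasureTheory

/-- A finite discounted MDP without reward. -/
structure MDP (S A : Type) [Fintype S] [Fintype A] where
  s0 : S
  p : S → A → S → ℝ
  p_nonneg : ∀ s a s', 0 ≤ p s a s'
  p_sum_one : ∀ s a, ∑ s', p s a s' = 1
  disc : ℝ
  disc_nonneg : 0 ≤ disc
  disc_lt_one : disc < 1

section Defs

variable {S A : Type} [Fintype S] [Fintype A] [DecidableEq S] [DecidableEq A]

/-- `π` is a (stochastic) policy: each `π s` is a probability distribution on actions. -/
def IsPolicy (π : S → A → ℝ) : Prop :=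
  (∀ s a, 0 ≤ π s a) ∧ ∀ s, ∑ a, π s a = 1

open Classical in
/-- The stochastic policy induced by a deterministic policy `d`. -/
noncomputable def detPolicy (d : S → A) : S → A → ℝ :=
  fun s a => if a = d s then 1 else 0

/-- The state-transition matrix of a policy. -/
noncomputable def Pmat (M : MDP S A) (π : S → A → ℝ) : Matrix S S ℝ :=
  Matrix.of fun s s' => ∑ a, π s a * M.p s a s'

/-- The value function `V^π(s; p, r)`. -/
noncomputable def Vpi (M : MDP S A) (π : S → A → ℝ) (r : S × A → ℝ) (s : S) : ℝ :=
  ∑' t : ℕ, M.disc ^ t * ((Pmat M π ^ t).mulVec (fun s' => ∑ a, π s' a * r (s', a))) s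

/-- The optimal value function `V*(s; p, r)`. -/
noncomputable def Vstar (M : MDP S A) (r : S × A → ℝ) (s : S) : ℝ :=
  ⨆ π : {π : S → A → ℝ // IsPolicy π}, Vpi M π.1 r s

noncomputable def Qpi (M : MDP S A) (π : S → A → ℝ) (r : S × A → ℝ) (s : S) (a : A) : ℝ :=
  r (s, a) + M.disc * ∑ s', M.p s a s' * Vpi M π r s'

noncomputable def Api (M : MDP S A) (π : S → A → ℝ) (r : S × A → ℝ) (s : S) (a : A) : ℝ :=
  Qpi M π r s a - Vpi M π r s

noncomputable def Qstar (M : MDP S A) (r : S × A → ℝ) (s : S) (a : A) : ℝ :=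
  r (s, a) + M.disc * ∑ s', M.p s a s' * Vstar M r s'

noncomputable def Astar (M : MDP S A) (r : S × A → ℝ) (s : S) (a : A) : ℝ :=
  Qstar M r s a - Vstar M r s

/-- The soft (entropy-regularized) value function `V^π_λ(s; p, r)`. -/
noncomputable def VpiSoft (M : MDP S A) (lam : ℝ) (π : S → A → ℝ) (r : S × A → ℝ) (s : S) : ℝ :=
  ∑' t : ℕ, M.disc ^ t *
    ((Pmat M π ^ t).mulVec
      (fun s' => ∑ a, π s' a * (r (s', a) - lam * Real.log (π s' a)))) s

noncomputable def VstarSoft (M : MDP S A) (lam : ℝ) (r : S × A → ℝ) (s : S) : ℝ :=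
  ⨆ π : {π : S → A → ℝ // IsPolicy π}, VpiSoft M lam π.1 r s

noncomputable def QstarSoft (M : MDP S A) (lam : ℝ) (r : S × A → ℝ) (s : S) (a : A) : ℝ :=
  r (s, a) + M.disc * ∑ s', M.p s a s' * VstarSoft M lam r s'

noncomputable def AstarSoft (M : MDP S A) (lam : ℝ) (r : S × A → ℝ) (s : S) (a : A) : ℝ :=
  QstarSoft M lam r s a - VstarSoft M lam r s

/-- The OPT feasible set `R^{OPT,S̄}_{M,d}` of a deterministic policy `d`. -/
def ROPT (M : MDP S A) (Sbar : Set S) (d : S → A) : Set (S × A → ℝ) :=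
  {r | ∀ s ∈ Sbar, ∀ a, Qstar M r s a ≤ Qstar M r s (d s)}

/-- The MCE feasible set `R^{MCE,S}_{M,π}` (with `S̄ = S`). -/
def RMCE (M : MDP S A) (lam : ℝ) (π : S → A → ℝ) : Set (S × A → ℝ) :=
  {r | ∀ s a, π s a =
      Real.exp (QstarSoft M lam r s a / lam) / ∑ a', Real.exp (QstarSoft M lam r s a' / lam)}

/-- The BIRL feasible set `R^{BIRL,S}_{M,π}` (with `S̄ = S`). -/
def RBIRL (M : MDP S A) (bet : ℝ) (π : S → A → ℝ) : Set (S × A → ℝ) :=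
  {r | ∀ s a, π s a =
      Real.exp (Qstar M r s a / bet) / ∑ a', Real.exp (Qstar M r s a' / bet)}

open Classical in
/-- The matrix `W_{p,π}`. -/
noncomputable def Wmat (M : MDP S A) (π : S → A → ℝ) : Matrix S S ℝ :=
  Matrix.of fun s s' => (if s' = s then (1 : ℝ) else 0) - M.disc * ∑ a, π s a * M.p s a s'

/-- `k_π := |det W_{p,π}|^{-1/|S|}`. -/
noncomputable def kpi (M : MDP S A) (π : S → A → ℝ) : ℝ :=
  |(Wmat M π).det| ^ (-(1 : ℝ) / (Fintype.card S : ℝ))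

/-- `𝒮R^{OPT}_M`. -/
def SROPT (M : MDP S A) (C1 C2 : ℝ) : Set (S × A → ℝ) :=
  {r | ∀ π : S → A → ℝ, IsPolicy π → (∀ s, Vpi M π r s = Vstar M r s) →
      ∀ s a, |Vpi M π r s| ≤ C1 * kpi M π ∧ |Api M π r s a| ≤ C2}

/-- `𝒮R^{MCE}_M`. -/
def SRMCE (M : MDP S A) (lam C1 C2 : ℝ) : Set (S × A → ℝ) :=
  {r | ∀ s a, |VstarSoft M lam r s| ≤ C1 ∧ |AstarSoft M lam r s a| ≤ C2}

/-- `𝒮R^{BIRL}_M`. -/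
def SRBIRL (M : MDP S A) (C1 C2 : ℝ) : Set (S × A → ℝ) :=
  {r | ∀ s a, |Vstar M r s| ≤ C1 ∧ |Astar M r s a| ≤ C2}

/-- Discounted state occupancy `∑_{t≥0} γ^t P_{M,π}(s_t = s)`. -/
noncomputable def occ (M : MDP S A) (π : S → A → ℝ) (s : S) : ℝ :=
  ∑' t : ℕ, M.disc ^ t * (Pmat M π ^ t) M.s0 s

/-- The support `S_{M,π}` of a policy: states reachable with positive probability. -/
def supp (M : MDP S A) (π : S → A → ℝ) : Set S := {s | 0 < occ M π s}

end Defs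

/-- The unit hypercube `[-1,1]^{S×A}`. -/
def cube (S A : Type) [Fintype S] [Fintype A] : Set (S × A → ℝ) :=
  {r | ∀ sa, |r sa| ≤ 1}

section Prob

variable {S A : Type} [Fintype S] [Fintype A] [DecidableEq S] [DecidableEq A]

open Classical in
/-- Probability of a length-`H` trajectory under policy `π` started at `M.s0`. -/
noncomputable def trajP (M : MDP S A) (π : S → A → ℝ) {H : ℕ} (τ : Fin H → S × A) : ℝ :=
  ∏ t : Fin H,
    (if _h : (t : ℕ) = 0 then (if (τ t).1 = M.s0 then (1 : ℝ) else 0)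
     else M.p (τ ⟨(t : ℕ) - 1, lt_of_le_of_lt (Nat.sub_le _ _) t.isLt⟩).1
              (τ ⟨(t : ℕ) - 1, lt_of_le_of_lt (Nat.sub_le _ _) t.isLt⟩).2 (τ t).1)
    * π (τ t).1 (τ t).2

/-- Probability of a dataset of `N` i.i.d. trajectories. -/
noncomputable def dataP (M : MDP S A) (π : S → A → ℝ) {N H : ℕ}
    (D : Fin N → Fin H → S × A) : ℝ :=
  ∏ i, trajP M π (D i)

/-- Probability of an event over datasets of `N` i.i.d. length-`H` trajectories. -/
noncomputable def PrD (M : MDP S A) (π : S → A → ℝ) {N H : ℕ}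
    (E : Set (Fin N → Fin H → S × A)) : ℝ :=
  ∑ D : Fin N → Fin H → S × A, Set.indicator E (dataP M π) D

/-- Probability that a length-`H` trajectory visits state `s`. -/
noncomputable def visitP (M : MDP S A) (π : S → A → ℝ) (H : ℕ) (s : S) : ℝ :=
  ∑ τ : Fin H → S × A, Set.indicator {τ' : Fin H → S × A | ∃ t, (τ' t).1 = s} (trajP M π) τ

/-- `p^{min,H}_{M,π}`: minimum over support states of the visiting probability. -/
noncomputable def pminH (M : MDP S A) (π : S → A → ℝ) (H : ℕ) : ℝ :=
  ⨅ s : ↥(supp M π), visitP M π H (s : S)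

end Prob

open Classical in
/-- `N(s,a)`: number of trajectories visiting `s` and playing `a` at the first visit. -/
noncomputable def NsaCount {S A : Type} {N H : ℕ} (D : Fin N → Fin H → S × A)
    (s : S) (a : A) : ℕ :=
  (Finset.univ.filter fun i : Fin N =>
    ∃ t : Fin H, (D i t).1 = s ∧ (D i t).2 = a ∧ ∀ t' : Fin H, t' < t → (D i t').1 ≠ s).card

/-- `N(s) = ∑_a N(s,a)`. -/
noncomputable def NsCount {S A : Type} [Fintype A] {N H : ℕ}
    (D : Fin N → Fin H → S × A) (s : S) : ℕ :=
  ∑ a, NsaCount D s a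

/-- The clipped empirical policy `π̂(a|s) = max{π_min', N(s,a)/max{1,N(s)}}`. -/
noncomputable def pihat {S A : Type} [Fintype A] (πmin' : ℝ) {N H : ℕ}
    (D : Fin N → Fin H → S × A) (s : S) (a : A) : ℝ :=
  max πmin' ((NsaCount D s a : ℝ) / max 1 (NsCount D s : ℝ))

section Aux1
variable {S A : Type} [Fintype S] [Fintype A] [DecidableEq S] [DecidableEq A]

lemma policy_le_one {π : S → A → ℝ} (hπ : IsPolicy π) (s : S) (a : A) : π s a ≤ 1 := by
  calc π s a ≤ ∑ a', π s a' :=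
        Finset.single_le_sum (fun a' _ => hπ.1 s a') (Finset.mem_univ a)
    _ = 1 := hπ.2 s

lemma trajP_nonneg (M : MDP S A) {π : S → A → ℝ} (hπ : IsPolicy π) {H : ℕ} (τ : Fin H → S × A) :
    0 ≤ trajP M π τ := by
  unfold trajP
  apply Finset.prod_nonneg
  intro t _
  apply mul_nonneg _ (hπ.1 _ _)
  split
  · split <;> norm_num
  · exact M.p_nonneg _ _ _

lemma w_sum (M : MDP S A) {π : S → A → ℝ} (hπ : IsPolicy π) (x : S × A) :
    ∑ y : S × A, M.p x.1 x.2 y.1 * π y.1 y.2 = 1 := by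
  rw [Fintype.sum_prod_type]
  calc ∑ s', ∑ a', M.p x.1 x.2 s' * π s' a'
      = ∑ s', M.p x.1 x.2 s' * ∑ a', π s' a' := by simp [Finset.mul_sum]
    _ = 1 := by simp [hπ.2, M.p_sum_one]

lemma init_sum (M : MDP S A) {π : S → A → ℝ} (hπ : IsPolicy π) :
    ∑ y : S × A, (if y.1 = M.s0 then (1:ℝ) else 0) * π y.1 y.2 = 1 := by
  rw [Fintype.sum_prod_type]
  have h : ∀ s' : S, ∑ a', (if s' = M.s0 then (1:ℝ) else 0) * π s' a'
      = if s' = M.s0 then 1 else 0 := by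
    intro s'; split <;> simp [hπ.2]
  simp only [h]
  simp

lemma snoc_lt {X : Type} {m : ℕ} (σ : Fin m → X) (y : X) (j : ℕ) (h : j < m + 1) (h' : j < m) :
    (Fin.snoc σ y : Fin (m+1) → X) ⟨j, h⟩ = σ ⟨j, h'⟩ := by
  simp [Fin.snoc, h']

lemma trajP_one (M : MDP S A) (π : S → A → ℝ) (τ : Fin 1 → S × A) :
    trajP M π τ = (if (τ 0).1 = M.s0 then (1:ℝ) else 0) * π (τ 0).1 (τ 0).2 := by
  unfold trajP
  simp

lemma trajP_snoc (M : MDP S A) (π : S → A → ℝ) {m : ℕ} (hm : 0 < m)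
    (σ : Fin m → S × A) (y : S × A) :
    trajP M π (Fin.snoc σ y) =
      trajP M π σ *
        (M.p (σ ⟨m - 1, Nat.sub_lt hm one_pos⟩).1 (σ ⟨m - 1, Nat.sub_lt hm one_pos⟩).2 y.1 *
          π y.1 y.2) := by
  unfold trajP
  rw [Fin.prod_univ_castSucc]
  congr 1
  · apply Finset.prod_congr rfl
    intro i _
    have h1 : ((i.castSucc : Fin (m+1)) : ℕ) = (i : ℕ) := rfl
    by_cases h0 : (i : ℕ) = 0
    · simp only [h1, h0, dif_pos, Fin.snoc_castSucc]
    · have hi1 : (i : ℕ) - 1 < m := lt_of_le_of_lt (Nat.sub_le _ _) i.isLt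
      simp only [h1, dif_neg h0, Fin.snoc_castSucc, snoc_lt _ _ _ _ hi1]
  · have hlast : ((Fin.last m : Fin (m+1)) : ℕ) = m := rfl
    have hm0 : ¬ (m = 0) := Nat.pos_iff_ne_zero.mp hm
    have hm1 : m - 1 < m := Nat.sub_lt hm one_pos
    simp only [hlast, dif_neg hm0, Fin.snoc_last, snoc_lt _ _ _ _ hm1]

lemma sum_snoc {X : Type} [Fintype X] {m : ℕ} (F : (Fin (m+1) → X) → ℝ) :
    ∑ τ : Fin (m+1) → X, F τ = ∑ σ : Fin m → X, ∑ y : X, F (Fin.snoc σ y) := by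
  calc ∑ τ : Fin (m+1) → X, F τ
      = ∑ p : (Fin m → X) × X, F (Fin.snoc p.1 p.2) := by
        symm
        apply Fintype.sum_bijective (fun p : (Fin m → X) × X => Fin.snoc p.1 p.2)
        · constructor
          · intro p q h
            have h1 : p.1 = q.1 := by
              have := congrArg Fin.init h
              rwa [Fin.init_snoc, Fin.init_snoc] at this
            have h2 : p.2 = q.2 := by
              have := congrArg (fun f => f (Fin.last m)) h
              simpa [Fin.snoc_last] using this
            exact Prod.ext h1 h2
          · intro τ
            exact ⟨(Fin.init τ, τ (Fin.last m)), Fin.snoc_init_self τ⟩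
        · intro p; rfl
    _ = ∑ σ : Fin m → X, ∑ y : X, F (Fin.snoc σ y) := Fintype.sum_prod_type _

end Aux1
section Aux2
set_option linter.unusedSectionVars false
variable {S A : Type} [Fintype S] [Fintype A] [DecidableEq S] [DecidableEq A]

/-- Probability weight of a prefix `ρ` followed by arriving in state `s₁`. -/
noncomputable def arrP (M : MDP S A) (π : S → A → ℝ) : {t : ℕ} → (Fin t → S × A) → S → ℝ
  | 0, _, s₁ => if s₁ = M.s0 then 1 else 0
  | (_+1), ρ, s₁ => trajP M π ρ * M.p (ρ (Fin.last _)).1 (ρ (Fin.last _)).2 s₁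

lemma trajP_snoc_arr (M : MDP S A) (π : S → A → ℝ) {t : ℕ} (ρ : Fin t → S × A) (y : S × A) :
    trajP M π (Fin.snoc ρ y) = arrP M π ρ y.1 * π y.1 y.2 := by
  cases t with
  | zero =>
    have h0 : (Fin.snoc ρ y : Fin 1 → S × A) 0 = y := Fin.snoc_last _ _
    rw [trajP_one, h0]
    simp [arrP]
  | succ t =>
    rw [trajP_snoc M π (Nat.succ_pos t)]
    have he : (⟨t + 1 - 1, Nat.sub_lt (Nat.succ_pos t) one_pos⟩ : Fin (t+1)) = Fin.last t := by
      apply Fin.ext; simp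
    rw [he]
    simp [arrP]
    ring

lemma arrP_nonneg (M : MDP S A) {π : S → A → ℝ} (hπ : IsPolicy π) {t : ℕ}
    (ρ : Fin t → S × A) (s₁ : S) : 0 ≤ arrP M π ρ s₁ := by
  cases t with
  | zero => simp only [arrP]; split <;> norm_num
  | succ t => exact mul_nonneg (trajP_nonneg M hπ ρ) (M.p_nonneg _ _ _)

lemma sum_step (M : MDP S A) {π : S → A → ℝ} (hπ : IsPolicy π) {m : ℕ} (hm : 0 < m)
    (G : (Fin m → S × A) → ℝ) :
    ∑ τ : Fin (m+1) → S × A, trajP M π τ * G (Fin.init τ)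
      = ∑ σ : Fin m → S × A, trajP M π σ * G σ := by
  rw [sum_snoc (fun τ => trajP M π τ * G (Fin.init τ))]
  apply Finset.sum_congr rfl
  intro σ _
  have hrw : ∀ y : S × A,
      trajP M π (Fin.snoc σ y) * G (Fin.init (Fin.snoc σ y : Fin (m+1) → S × A))
        = trajP M π σ *
            (M.p (σ ⟨m - 1, Nat.sub_lt hm one_pos⟩).1 (σ ⟨m - 1, Nat.sub_lt hm one_pos⟩).2 y.1 *
              π y.1 y.2) * G σ := by
    intro y
    rw [Fin.init_snoc, trajP_snoc M π hm]
  rw [Finset.sum_congr rfl (fun y _ => hrw y)]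
  calc ∑ y : S × A,
      trajP M π σ *
        (M.p (σ ⟨m - 1, Nat.sub_lt hm one_pos⟩).1 (σ ⟨m - 1, Nat.sub_lt hm one_pos⟩).2 y.1 *
          π y.1 y.2) * G σ
      = trajP M π σ * G σ *
          ∑ y : S × A,
            M.p (σ ⟨m - 1, Nat.sub_lt hm one_pos⟩).1 (σ ⟨m - 1, Nat.sub_lt hm one_pos⟩).2 y.1 *
              π y.1 y.2 := by
        rw [Finset.mul_sum]
        apply Finset.sum_congr rfl
        intro y _
        ring
    _ = trajP M π σ * G σ := by rw [w_sum M hπ]; ring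

lemma sum_out (M : MDP S A) {π : S → A → ℝ} (hπ : IsPolicy π) :
    ∀ (H m : ℕ) (hm : 0 < m) (hmH : m ≤ H) (G : (Fin m → S × A) → ℝ),
    ∑ τ : Fin H → S × A, trajP M π τ * G (fun j => τ (Fin.castLE hmH j))
      = ∑ σ : Fin m → S × A, trajP M π σ * G σ := by
  intro H
  induction H with
  | zero => intro m hm hmH; omega
  | succ H ih =>
    intro m hm hmH G
    by_cases hmeq : m = H + 1
    · subst hmeq
      rfl
    · have hmH' : m ≤ H := by omega
      have hH : 0 < H := lt_of_lt_of_le hm hmH'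
      have hstep := sum_step M hπ (m := H) hH (fun σ => G (fun j => σ (Fin.castLE hmH' j)))
      calc ∑ τ : Fin (H+1) → S × A, trajP M π τ * G (fun j => τ (Fin.castLE hmH j))
          = ∑ τ : Fin (H+1) → S × A,
              trajP M π τ * G (fun j => (Fin.init τ) (Fin.castLE hmH' j)) := rfl
        _ = ∑ σ : Fin H → S × A, trajP M π σ * G (fun j => σ (Fin.castLE hmH' j)) := hstep
        _ = ∑ σ : Fin m → S × A, trajP M π σ * G σ := ih m hm hmH' G

lemma sum_fin_one (F : (Fin 1 → S × A) → ℝ) :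
    ∑ σ : Fin 1 → S × A, F σ = ∑ y : S × A, F (fun _ => y) := by
  exact (Equiv.sum_comp (Equiv.funUnique (Fin 1) (S × A)).symm F).symm

lemma trajP_sum_one (M : MDP S A) {π : S → A → ℝ} (hπ : IsPolicy π) {H : ℕ} (hH : 0 < H) :
    ∑ τ : Fin H → S × A, trajP M π τ = 1 := by
  have h1 : (1:ℕ) ≤ H := hH
  have := sum_out M hπ H 1 one_pos h1 (fun _ => 1)
  simp only [mul_one] at this
  rw [this, sum_fin_one (trajP M π)]
  calc ∑ y : S × A, trajP M π (fun _ => y)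
      = ∑ y : S × A, (if y.1 = M.s0 then (1:ℝ) else 0) * π y.1 y.2 := by
        apply Finset.sum_congr rfl
        intro y _
        rw [trajP_one]
    _ = 1 := init_sum M hπ

end Aux2
section Aux3
set_option linter.unusedSectionVars false
open Classical
variable {S A : Type} [Fintype S] [Fintype A] [DecidableEq S] [DecidableEq A]

/-- state marginal at time `t` (trajectories of length `t+1`). -/
noncomputable def mdist (M : MDP S A) (π : S → A → ℝ) (t : ℕ) (s : S) : ℝ :=
  ∑ σ : Fin (t+1) → S × A, if (σ (Fin.last t)).1 = s then trajP M π σ else 0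

lemma mdist_eq_arr (M : MDP S A) {π : S → A → ℝ} (hπ : IsPolicy π) (t : ℕ) (s : S) :
    mdist M π t s = ∑ ρ : Fin t → S × A, arrP M π ρ s := by
  unfold mdist
  rw [sum_snoc (fun σ => if (σ (Fin.last t)).1 = s then trajP M π σ else 0)]
  apply Finset.sum_congr rfl
  intro ρ _
  have h1 : ∀ y : S × A,
      (if ((Fin.snoc ρ y : Fin (t+1) → S × A) (Fin.last t)).1 = s
        then trajP M π (Fin.snoc ρ y) else 0)
      = (if y.1 = s then arrP M π ρ y.1 * π y.1 y.2 else 0) := by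
    intro y
    rw [Fin.snoc_last, trajP_snoc_arr]
  rw [Finset.sum_congr rfl (fun y _ => h1 y), Fintype.sum_prod_type]
  calc ∑ s₁, ∑ a₁, (if s₁ = s then arrP M π ρ s₁ * π s₁ a₁ else 0)
      = ∑ s₁, (if s₁ = s then arrP M π ρ s₁ * ∑ a₁, π s₁ a₁ else 0) := by
        apply Finset.sum_congr rfl
        intro s₁ _
        split
        · rw [Finset.mul_sum]
        · simp
    _ = arrP M π ρ s := by simp [hπ.2]

lemma mdist_zero (M : MDP S A) {π : S → A → ℝ} (hπ : IsPolicy π) (s : S) :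
    mdist M π 0 s = if s = M.s0 then 1 else 0 := by
  rw [mdist_eq_arr M hπ]
  rw [Fintype.sum_unique (fun ρ : Fin 0 → S × A => arrP M π ρ s)]
  rfl

lemma mdist_succ (M : MDP S A) {π : S → A → ℝ} (hπ : IsPolicy π) (t : ℕ) (s' : S) :
    mdist M π (t+1) s' = ∑ s₁, mdist M π t s₁ * Pmat M π s₁ s' := by
  rw [mdist_eq_arr M hπ]
  have harr : ∀ ρ : Fin (t+1) → S × A,
      arrP M π ρ s' = trajP M π ρ * M.p (ρ (Fin.last t)).1 (ρ (Fin.last t)).2 s' := fun _ => rfl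
  rw [Finset.sum_congr rfl (fun ρ _ => harr ρ)]
  rw [sum_snoc (fun ρ => trajP M π ρ * M.p (ρ (Fin.last t)).1 (ρ (Fin.last t)).2 s')]
  have h2 : ∀ (ρ : Fin t → S × A) (y : S × A),
      trajP M π (Fin.snoc ρ y) *
          M.p ((Fin.snoc ρ y : Fin (t+1) → S × A) (Fin.last t)).1
            ((Fin.snoc ρ y : Fin (t+1) → S × A) (Fin.last t)).2 s'
        = arrP M π ρ y.1 * (π y.1 y.2 * M.p y.1 y.2 s') := by
    intro ρ y
    rw [Fin.snoc_last, trajP_snoc_arr]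
    ring
  calc ∑ ρ : Fin t → S × A, ∑ y : S × A,
        trajP M π (Fin.snoc ρ y) *
          M.p ((Fin.snoc ρ y : Fin (t+1) → S × A) (Fin.last t)).1
            ((Fin.snoc ρ y : Fin (t+1) → S × A) (Fin.last t)).2 s'
      = ∑ ρ : Fin t → S × A, ∑ y : S × A, arrP M π ρ y.1 * (π y.1 y.2 * M.p y.1 y.2 s') := by
        apply Finset.sum_congr rfl
        intro ρ _
        exact Finset.sum_congr rfl (fun y _ => h2 ρ y)
    _ = ∑ ρ : Fin t → S × A, ∑ s₁, arrP M π ρ s₁ * Pmat M π s₁ s' := by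
        apply Finset.sum_congr rfl
        intro ρ _
        rw [Fintype.sum_prod_type]
        apply Finset.sum_congr rfl
        intro s₁ _
        have hP : Pmat M π s₁ s' = ∑ a, π s₁ a * M.p s₁ a s' := rfl
        rw [hP, Finset.mul_sum]
    _ = ∑ s₁, mdist M π t s₁ * Pmat M π s₁ s' := by
        rw [Finset.sum_comm]
        apply Finset.sum_congr rfl
        intro s₁ _
        rw [mdist_eq_arr M hπ, Finset.sum_mul]

lemma mdist_eq_pow (M : MDP S A) {π : S → A → ℝ} (hπ : IsPolicy π) (t : ℕ) :
    ∀ s : S, mdist M π t s = (Pmat M π ^ t) M.s0 s := by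
  induction t with
  | zero =>
    intro s
    rw [mdist_zero M hπ, pow_zero]
    rw [Matrix.one_apply]
    by_cases h : s = M.s0 <;> simp [h, eq_comm]
  | succ t ih =>
    intro s
    rw [mdist_succ M hπ, pow_succ, Matrix.mul_apply]
    apply Finset.sum_congr rfl
    intro s₁ _
    rw [ih s₁]

lemma Pmat_pow_nonneg (M : MDP S A) {π : S → A → ℝ} (hπ : IsPolicy π) (t : ℕ) (s s' : S) :
    0 ≤ (Pmat M π ^ t) s s' := by
  induction t generalizing s s' with
  | zero =>
    rw [pow_zero, Matrix.one_apply]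
    split <;> norm_num
  | succ t ih =>
    rw [pow_succ, Matrix.mul_apply]
    apply Finset.sum_nonneg
    intro s₁ _
    apply mul_nonneg (ih s s₁)
    apply Finset.sum_nonneg
    intro a _
    exact mul_nonneg (hπ.1 _ _) (M.p_nonneg _ _ _)

lemma exists_pow_pos (M : MDP S A) {π : S → A → ℝ} (hπ : IsPolicy π) {s : S}
    (h : 0 < occ M π s) : ∃ t, 0 < (Pmat M π ^ t) M.s0 s := by
  by_contra hc
  push_neg at hc
  have hz : ∀ t, (Pmat M π ^ t) M.s0 s = 0 := fun t =>
    le_antisymm (hc t) (Pmat_pow_nonneg M hπ t _ _)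
  have : occ M π s = 0 := by
    unfold occ
    have : ∀ t : ℕ, M.disc ^ t * (Pmat M π ^ t) M.s0 s = 0 := by
      intro t; rw [hz t, mul_zero]
    simp [this]
  linarith

/-- states reachable within `k` steps -/
noncomputable def reachSet (M : MDP S A) (π : S → A → ℝ) (k : ℕ) : Finset S :=
  Finset.univ.filter (fun s => ∃ t ≤ k, 0 < (Pmat M π ^ t) M.s0 s)

lemma reach_mono (M : MDP S A) (π : S → A → ℝ) {k k' : ℕ} (h : k ≤ k') :
    reachSet M π k ⊆ reachSet M π k' := by
  intro s hs
  simp only [reachSet, Finset.mem_filter, Finset.mem_univ, true_and] at hs ⊢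
  obtain ⟨t, ht, hp⟩ := hs
  exact ⟨t, le_trans ht h, hp⟩

lemma reach_step (M : MDP S A) {π : S → A → ℝ} (hπ : IsPolicy π) {k : ℕ} {s₁ s : S}
    (h1 : s₁ ∈ reachSet M π k) (h2 : 0 < Pmat M π s₁ s) : s ∈ reachSet M π (k+1) := by
  simp only [reachSet, Finset.mem_filter, Finset.mem_univ, true_and] at h1 ⊢
  obtain ⟨t, ht, hp⟩ := h1
  refine ⟨t+1, by omega, ?_⟩
  rw [pow_succ, Matrix.mul_apply]
  have hterm : 0 < (Pmat M π ^ t) M.s0 s₁ * Pmat M π s₁ s := mul_pos hp h2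
  calc (0:ℝ) < (Pmat M π ^ t) M.s0 s₁ * Pmat M π s₁ s := hterm
    _ ≤ ∑ x, (Pmat M π ^ t) M.s0 x * Pmat M π x s := by
      apply Finset.single_le_sum (f := fun x => (Pmat M π ^ t) M.s0 x * Pmat M π x s)
        (fun x _ => ?_) (Finset.mem_univ s₁)
      apply mul_nonneg (Pmat_pow_nonneg M hπ t _ _)
      apply Finset.sum_nonneg
      intro a _
      exact mul_nonneg (hπ.1 _ _) (M.p_nonneg _ _ _)

lemma reach_succ_of_mem (M : MDP S A) {π : S → A → ℝ} (hπ : IsPolicy π) {k : ℕ} {s : S}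
    (h : s ∈ reachSet M π (k+1)) :
    s ∈ reachSet M π k ∨ ∃ s₁ ∈ reachSet M π k, 0 < Pmat M π s₁ s := by
  simp only [reachSet, Finset.mem_filter, Finset.mem_univ, true_and] at h
  obtain ⟨t, ht, hp⟩ := h
  rcases Nat.lt_or_ge t (k+1) with h' | h'
  · left
    simp only [reachSet, Finset.mem_filter, Finset.mem_univ, true_and]
    exact ⟨t, by omega, hp⟩
  · have ht' : t = k + 1 := by omega
    subst ht'
    right
    rw [pow_succ, Matrix.mul_apply] at hp
    by_contra hc
    push_neg at hc
    have : ∀ x ∈ Finset.univ, (Pmat M π ^ k) M.s0 x * Pmat M π x s ≤ 0 := by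
      intro x _
      rcases lt_or_ge 0 ((Pmat M π ^ k) M.s0 x) with hx | hx
      · have hxr : x ∈ reachSet M π k := by
          simp only [reachSet, Finset.mem_filter, Finset.mem_univ, true_and]
          exact ⟨k, le_refl _, hx⟩
        have := hc x hxr
        have hPnn : 0 ≤ Pmat M π x s := by
          apply Finset.sum_nonneg
          intro a _
          exact mul_nonneg (hπ.1 _ _) (M.p_nonneg _ _ _)
        have hP0 : Pmat M π x s = 0 := le_antisymm this hPnn
        rw [hP0, mul_zero]
      · have := Pmat_pow_nonneg M hπ k M.s0 x
        have hx0 : (Pmat M π ^ k) M.s0 x = 0 := le_antisymm hx this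
        rw [hx0, zero_mul]
    have := Finset.sum_nonpos this
    linarith

lemma reach_stab (M : MDP S A) {π : S → A → ℝ} (hπ : IsPolicy π) {k : ℕ}
    (h : reachSet M π (k+1) ⊆ reachSet M π k) :
    ∀ j, reachSet M π (k+j) ⊆ reachSet M π k := by
  intro j
  induction j with
  | zero => exact subset_refl _
  | succ j ih =>
    intro s hs
    rcases reach_succ_of_mem M hπ hs with h1 | ⟨s₁, hs₁, hP⟩
    · exact ih h1
    · exact h (reach_step M hπ (ih hs₁) hP)

lemma s0_mem_reach (M : MDP S A) (π : S → A → ℝ) (k : ℕ) : M.s0 ∈ reachSet M π k := by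
  simp only [reachSet, Finset.mem_filter, Finset.mem_univ, true_and]
  refine ⟨0, Nat.zero_le _, ?_⟩
  rw [pow_zero, Matrix.one_apply_eq]
  norm_num

lemma exists_stab (M : MDP S A) {π : S → A → ℝ} (hπ : IsPolicy π) :
    ∃ k ≤ Fintype.card S - 1, reachSet M π (k+1) ⊆ reachSet M π k := by
  by_contra hc
  push_neg at hc
  have hS : 0 < Fintype.card S := Fintype.card_pos_iff.mpr ⟨M.s0⟩
  have hgrow : ∀ k ≤ Fintype.card S, k + 1 ≤ (reachSet M π k).card := by
    intro k
    induction k with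
    | zero =>
      intro _
      have : M.s0 ∈ reachSet M π 0 := s0_mem_reach M π 0
      have := Finset.card_pos.mpr ⟨M.s0, this⟩
      omega
    | succ k ih =>
      intro hk
      have h1 := ih (by omega)
      have h2 := hc k (by omega)
      have hss : reachSet M π k ⊂ reachSet M π (k+1) := by
        rw [Finset.ssubset_def]
        exact ⟨reach_mono M π (by omega), h2⟩
      have := Finset.card_lt_card hss
      omega
  have := hgrow (Fintype.card S) (le_refl _)
  have hle : (reachSet M π (Fintype.card S)).card ≤ Fintype.card S := by
    simpa using Finset.card_le_card (Finset.subset_univ (reachSet M π (Fintype.card S)))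
  omega

lemma reach_all (M : MDP S A) {π : S → A → ℝ} (hπ : IsPolicy π) {t : ℕ} {s : S}
    (h : 0 < (Pmat M π ^ t) M.s0 s) : s ∈ reachSet M π (Fintype.card S - 1) := by
  obtain ⟨k, hk, hstab⟩ := exists_stab M hπ
  have hmem : s ∈ reachSet M π t := by
    simp only [reachSet, Finset.mem_filter, Finset.mem_univ, true_and]
    exact ⟨t, le_refl _, h⟩
  rcases le_or_gt t k with h1 | h1
  · exact reach_mono M π (le_trans h1 hk) hmem
  · have : t = k + (t - k) := by omega
    rw [this] at hmem
    exact reach_mono M π hk (reach_stab M hπ hstab (t - k) hmem)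

lemma exists_short_pow_pos (M : MDP S A) {π : S → A → ℝ} (hπ : IsPolicy π) {s : S}
    (h : 0 < occ M π s) : ∃ t < Fintype.card S, 0 < (Pmat M π ^ t) M.s0 s := by
  obtain ⟨t0, ht0⟩ := exists_pow_pos M hπ h
  have := reach_all M hπ ht0
  simp only [reachSet, Finset.mem_filter, Finset.mem_univ, true_and] at this
  obtain ⟨t, ht, hp⟩ := this
  have hS : 0 < Fintype.card S := Fintype.card_pos_iff.mpr ⟨M.s0⟩
  exact ⟨t, by omega, hp⟩

lemma marginal_le_visitP (M : MDP S A) {π : S → A → ℝ} (hπ : IsPolicy π) {H : ℕ} {t : ℕ}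
    (ht : t < H) (s : S) : (Pmat M π ^ t) M.s0 s ≤ visitP M π H s := by
  have hmH : t + 1 ≤ H := ht
  have hsum := sum_out M hπ H (t+1) (Nat.succ_pos t) hmH
    (fun σ => if (σ (Fin.last t)).1 = s then 1 else 0)
  rw [← mdist_eq_pow M hπ t s]
  have hL : mdist M π t s
      = ∑ τ : Fin H → S × A, trajP M π τ *
          (if (τ (Fin.castLE hmH (Fin.last t))).1 = s then 1 else 0) := by
    rw [hsum]
    unfold mdist
    apply Finset.sum_congr rfl
    intro σ _
    split <;> simp
  rw [hL]
  unfold visitP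
  apply Finset.sum_le_sum
  intro τ _
  by_cases hfst : (τ (Fin.castLE hmH (Fin.last t))).1 = s
  · have hmem : τ ∈ {τ' : Fin H → S × A | ∃ u, (τ' u).1 = s} := ⟨_, hfst⟩
    rw [if_pos hfst, Set.indicator_of_mem hmem, mul_one]
  · rw [if_neg hfst, mul_zero]
    rw [Set.indicator_apply]
    split
    · exact trajP_nonneg M hπ τ
    · exact le_refl 0

lemma visitP_pos (M : MDP S A) {π : S → A → ℝ} (hπ : IsPolicy π) {H : ℕ}
    (hH : Fintype.card S ≤ H) {s : S} (h : 0 < occ M π s) : 0 < visitP M π H s := by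
  obtain ⟨t, ht, hp⟩ := exists_short_pow_pos M hπ h
  exact lt_of_lt_of_le hp (marginal_le_visitP M hπ (lt_of_lt_of_le ht hH) s)

lemma pminH_le (M : MDP S A) (π : S → A → ℝ) (H : ℕ) {s : S} (hs : s ∈ supp M π) :
    pminH M π H ≤ visitP M π H s := by
  unfold pminH
  have : Nonempty ↥(supp M π) := ⟨⟨s, hs⟩⟩
  apply ciInf_le _ (⟨s, hs⟩ : ↥(supp M π))
  apply Finite.bddBelow_range

lemma pminH_pos (M : MDP S A) {π : S → A → ℝ} (hπ : IsPolicy π) {H : ℕ}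
    (hH : Fintype.card S ≤ H) (hsupp : supp M π = Set.univ) : 0 < pminH M π H := by
  have hne : Nonempty ↥(supp M π) := ⟨⟨M.s0, by rw [hsupp]; trivial⟩⟩
  unfold pminH
  obtain ⟨j, hj⟩ := Finite.exists_min (fun s : ↥(supp M π) => visitP M π H (s : S))
  have hjpos : 0 < visitP M π H (j : S) := visitP_pos M hπ hH j.2
  calc (0:ℝ) < visitP M π H (j : S) := hjpos
    _ ≤ ⨅ s : ↥(supp M π), visitP M π H (s : S) := le_ciInf hj

end Aux3
section Aux4
set_option linter.unusedSectionVars false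
open Classical
variable {S A : Type} [Fintype S] [Fintype A] [DecidableEq S] [DecidableEq A]

/-- one-trajectory probability of an event -/
noncomputable def P1 (M : MDP S A) (π : S → A → ℝ) {H : ℕ} (e : Set (Fin H → S × A)) : ℝ :=
  ∑ τ : Fin H → S × A, Set.indicator e (trajP M π) τ

lemma P1_nonneg (M : MDP S A) {π : S → A → ℝ} (hπ : IsPolicy π) {H : ℕ}
    (e : Set (Fin H → S × A)) : 0 ≤ P1 M π e := by
  apply Finset.sum_nonneg
  intro τ _
  rw [Set.indicator_apply]
  split
  · exact trajP_nonneg M hπ τ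
  · exact le_refl 0

lemma P1_le_one (M : MDP S A) {π : S → A → ℝ} (hπ : IsPolicy π) {H : ℕ} (hH : 0 < H)
    (e : Set (Fin H → S × A)) : P1 M π e ≤ 1 := by
  rw [← trajP_sum_one M hπ hH]
  apply Finset.sum_le_sum
  intro τ _
  rw [Set.indicator_apply]
  split
  · exact le_refl _
  · exact trajP_nonneg M hπ τ

lemma P1_mono (M : MDP S A) {π : S → A → ℝ} (hπ : IsPolicy π) {H : ℕ}
    {e e' : Set (Fin H → S × A)} (h : e ⊆ e') : P1 M π e ≤ P1 M π e' := by
  apply Finset.sum_le_sum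
  intro τ _
  rw [Set.indicator_apply, Set.indicator_apply]
  split
  · next hm => rw [if_pos (h hm)]
  · split
    · exact trajP_nonneg M hπ τ
    · exact le_refl 0

lemma exists_first {s : S} {H : ℕ} {τ : Fin H → S × A} (h : ∃ u, (τ u).1 = s) :
    ∃ t0 : Fin H, (τ t0).1 = s ∧ ∀ u, u < t0 → (τ u).1 ≠ s := by
  let T : Finset (Fin H) := Finset.univ.filter (fun u => (τ u).1 = s)
  have hT : T.Nonempty := by
    obtain ⟨u, hu⟩ := h
    exact ⟨u, by simp [T, hu]⟩
  refine ⟨T.min' hT, ?_, ?_⟩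
  · have := T.min'_mem hT
    simpa [T] using this
  · intro u hu hus
    have : T.min' hT ≤ u := T.min'_le u (by simp [T, hus])
    exact absurd hu (not_lt.mpr this)

lemma first_unique {s : S} {H : ℕ} {τ : Fin H → S × A} {t t' : Fin H}
    (h1 : (τ t).1 = s) (h2 : ∀ u, u < t → (τ u).1 ≠ s)
    (h1' : (τ t').1 = s) (h2' : ∀ u, u < t' → (τ u).1 ≠ s) : t = t' := by
  by_contra hne
  rcases lt_or_gt_of_ne hne with h | h
  · exact h2' t h h1
  · exact h2 t' h h1'

/-- weight of prefixes avoiding `s` and then arriving at `s` -/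
noncomputable def fvW (M : MDP S A) (π : S → A → ℝ) (s : S) {t0 : ℕ}
    (ρ : Fin t0 → S × A) : ℝ :=
  if (∀ j : Fin t0, (ρ j).1 ≠ s) then arrP M π ρ s else 0

lemma snoc_cond_iff {s : S} {t0 : ℕ} (ρ : Fin t0 → S × A) (y : S × A) :
    (∀ j : Fin (t0+1), j < Fin.last t0 → ((Fin.snoc ρ y : Fin (t0+1) → S × A) j).1 ≠ s)
      ↔ (∀ j : Fin t0, (ρ j).1 ≠ s) := by
  constructor
  · intro h j
    have hj : (j.castSucc : Fin (t0+1)) < Fin.last t0 := by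
      rw [Fin.lt_def]
      simpa using j.isLt
    have := h j.castSucc hj
    rwa [Fin.snoc_castSucc] at this
  · intro h j hj
    have hjv : (j : ℕ) < t0 := by
      rw [Fin.lt_def] at hj
      simpa using hj
    have h2 := h ⟨j, hjv⟩
    rw [← snoc_lt ρ y j.1 j.isLt hjv] at h2
    exact h2

lemma core_sa (M : MDP S A) {π : S → A → ℝ} (hπ : IsPolicy π) (s : S) (a : A) (t0 : ℕ) :
    ∑ σ : Fin (t0+1) → S × A,
      trajP M π σ *
        (if ((σ (Fin.last t0)).1 = s ∧ (σ (Fin.last t0)).2 = a ∧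
            ∀ j : Fin (t0+1), j < Fin.last t0 → (σ j).1 ≠ s) then (1:ℝ) else 0)
      = π s a * ∑ ρ : Fin t0 → S × A, fvW M π s ρ := by
  rw [sum_snoc (fun σ : Fin (t0+1) → S × A =>
    trajP M π σ *
      (if ((σ (Fin.last t0)).1 = s ∧ (σ (Fin.last t0)).2 = a ∧
          ∀ j : Fin (t0+1), j < Fin.last t0 → (σ j).1 ≠ s) then (1:ℝ) else 0))]
  rw [Finset.mul_sum]
  apply Finset.sum_congr rfl
  intro ρ _
  have hterm : ∀ y : S × A,
      trajP M π (Fin.snoc ρ y) *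
        (if (((Fin.snoc ρ y : Fin (t0+1) → S × A) (Fin.last t0)).1 = s ∧
            ((Fin.snoc ρ y : Fin (t0+1) → S × A) (Fin.last t0)).2 = a ∧
            ∀ j : Fin (t0+1), j < Fin.last t0 →
              ((Fin.snoc ρ y : Fin (t0+1) → S × A) j).1 ≠ s) then (1:ℝ) else 0)
      = arrP M π ρ y.1 * π y.1 y.2 *
          (if (y.1 = s ∧ y.2 = a ∧ ∀ j : Fin t0, (ρ j).1 ≠ s) then (1:ℝ) else 0) := by
    intro y
    rw [trajP_snoc_arr, Fin.snoc_last]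
    congr 1
    apply if_congr _ rfl rfl
    rw [snoc_cond_iff]
  rw [Finset.sum_congr rfl (fun y _ => hterm y), Fintype.sum_prod_type]
  by_cases hav : ∀ j : Fin t0, (ρ j).1 ≠ s
  · calc ∑ s₁, ∑ a₁, arrP M π ρ s₁ * π s₁ a₁ *
          (if (s₁ = s ∧ a₁ = a ∧ ∀ j : Fin t0, (ρ j).1 ≠ s) then (1:ℝ) else 0)
        = ∑ s₁, ∑ a₁, (if s₁ = s ∧ a₁ = a then arrP M π ρ s₁ * π s₁ a₁ else 0) := by
          apply Finset.sum_congr rfl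
          intro s₁ _
          apply Finset.sum_congr rfl
          intro a₁ _
          by_cases h1 : s₁ = s ∧ a₁ = a
          · rw [if_pos ⟨h1.1, h1.2, hav⟩, if_pos h1, mul_one]
          · have : ¬(s₁ = s ∧ a₁ = a ∧ ∀ j : Fin t0, (ρ j).1 ≠ s) := by
              intro hcon
              exact h1 ⟨hcon.1, hcon.2.1⟩
            rw [if_neg this, if_neg h1, mul_zero]
      _ = arrP M π ρ s * π s a := by
          have hinner : ∀ s₁, (∑ a₁, if s₁ = s ∧ a₁ = a then arrP M π ρ s₁ * π s₁ a₁ else 0)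
              = if s₁ = s then arrP M π ρ s₁ * π s₁ a else 0 := by
            intro s₁
            by_cases h1 : s₁ = s
            · subst h1
              simp
            · simp [h1]
          rw [Finset.sum_congr rfl (fun s₁ _ => hinner s₁)]
          simp
      _ = π s a * fvW M π s ρ := by
          rw [fvW, if_pos hav]
          ring
  · calc ∑ s₁, ∑ a₁, arrP M π ρ s₁ * π s₁ a₁ *
          (if (s₁ = s ∧ a₁ = a ∧ ∀ j : Fin t0, (ρ j).1 ≠ s) then (1:ℝ) else 0)
        = 0 := by
          apply Finset.sum_eq_zero
          intro s₁ _
          apply Finset.sum_eq_zero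
          intro a₁ _
          have : ¬(s₁ = s ∧ a₁ = a ∧ ∀ j : Fin t0, (ρ j).1 ≠ s) := by
            intro hcon
            exact hav hcon.2.2
          rw [if_neg this, mul_zero]
      _ = π s a * fvW M π s ρ := by
          rw [fvW, if_neg hav, mul_zero]

lemma core_s (M : MDP S A) {π : S → A → ℝ} (hπ : IsPolicy π) (s : S) (t0 : ℕ) :
    ∑ σ : Fin (t0+1) → S × A,
      trajP M π σ *
        (if ((σ (Fin.last t0)).1 = s ∧
            ∀ j : Fin (t0+1), j < Fin.last t0 → (σ j).1 ≠ s) then (1:ℝ) else 0)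
      = ∑ ρ : Fin t0 → S × A, fvW M π s ρ := by
  rw [sum_snoc (fun σ : Fin (t0+1) → S × A =>
    trajP M π σ *
      (if ((σ (Fin.last t0)).1 = s ∧
          ∀ j : Fin (t0+1), j < Fin.last t0 → (σ j).1 ≠ s) then (1:ℝ) else 0))]
  apply Finset.sum_congr rfl
  intro ρ _
  have hterm : ∀ y : S × A,
      trajP M π (Fin.snoc ρ y) *
        (if (((Fin.snoc ρ y : Fin (t0+1) → S × A) (Fin.last t0)).1 = s ∧
            ∀ j : Fin (t0+1), j < Fin.last t0 →
              ((Fin.snoc ρ y : Fin (t0+1) → S × A) j).1 ≠ s) then (1:ℝ) else 0)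
      = arrP M π ρ y.1 * π y.1 y.2 *
          (if (y.1 = s ∧ ∀ j : Fin t0, (ρ j).1 ≠ s) then (1:ℝ) else 0) := by
    intro y
    rw [trajP_snoc_arr, Fin.snoc_last]
    congr 1
    apply if_congr _ rfl rfl
    rw [snoc_cond_iff]
  rw [Finset.sum_congr rfl (fun y _ => hterm y), Fintype.sum_prod_type]
  by_cases hav : ∀ j : Fin t0, (ρ j).1 ≠ s
  · calc ∑ s₁, ∑ a₁, arrP M π ρ s₁ * π s₁ a₁ *
          (if (s₁ = s ∧ ∀ j : Fin t0, (ρ j).1 ≠ s) then (1:ℝ) else 0)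
        = ∑ s₁, (if s₁ = s then arrP M π ρ s₁ * ∑ a₁, π s₁ a₁ else 0) := by
          apply Finset.sum_congr rfl
          intro s₁ _
          by_cases h1 : s₁ = s
          · rw [if_pos h1, Finset.mul_sum]
            apply Finset.sum_congr rfl
            intro a₁ _
            rw [if_pos ⟨h1, hav⟩, mul_one]
          · rw [if_neg h1]
            apply Finset.sum_eq_zero
            intro a₁ _
            have : ¬(s₁ = s ∧ ∀ j : Fin t0, (ρ j).1 ≠ s) := fun hcon => h1 hcon.1
            rw [if_neg this, mul_zero]
      _ = arrP M π ρ s := by simp [hπ.2]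
      _ = fvW M π s ρ := by rw [fvW, if_pos hav]
  · calc ∑ s₁, ∑ a₁, arrP M π ρ s₁ * π s₁ a₁ *
          (if (s₁ = s ∧ ∀ j : Fin t0, (ρ j).1 ≠ s) then (1:ℝ) else 0)
        = 0 := by
          apply Finset.sum_eq_zero
          intro s₁ _
          apply Finset.sum_eq_zero
          intro a₁ _
          have : ¬(s₁ = s ∧ ∀ j : Fin t0, (ρ j).1 ≠ s) := fun hcon => hav hcon.2
          rw [if_neg this, mul_zero]
      _ = fvW M π s ρ := by rw [fvW, if_neg hav]

end Aux4
section Aux5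
set_option linter.unusedSectionVars false
open Classical
variable {S A : Type} [Fintype S] [Fintype A] [DecidableEq S] [DecidableEq A]

variable {H : ℕ}

/-- event: visit `s` and play `a` at the first visit -/
def Esa (s : S) (a : A) : Set (Fin H → S × A) :=
  {τ | ∃ t, (τ t).1 = s ∧ (τ t).2 = a ∧ ∀ t' : Fin H, t' < t → (τ t').1 ≠ s}

/-- event: visit `s` -/
def Es (s : S) : Set (Fin H → S × A) := {τ' | ∃ t, (τ' t).1 = s}

def Aact (s : S) (a : A) (t0 : Fin H) : Set (Fin H → S × A) :=
  {τ | (τ t0).1 = s ∧ (τ t0).2 = a ∧ ∀ u, u < t0 → (τ u).1 ≠ s}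

def Afin (s : S) (t0 : Fin H) : Set (Fin H → S × A) :=
  {τ | (τ t0).1 = s ∧ ∀ u, u < t0 → (τ u).1 ≠ s}

lemma restrict_cond_iff {s : S} (τ : Fin H → S × A) (t0 : Fin H) :
    (∀ j : Fin ((t0 : ℕ)+1), j < Fin.last (t0 : ℕ) → (τ (Fin.castLE t0.isLt j)).1 ≠ s)
      ↔ (∀ u : Fin H, u < t0 → (τ u).1 ≠ s) := by
  constructor
  · intro h u hu
    have huv : (u : ℕ) < (t0 : ℕ) := hu
    have hj : (⟨(u : ℕ), by omega⟩ : Fin ((t0 : ℕ)+1)) < Fin.last (t0 : ℕ) := by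
      rw [Fin.lt_def]; simpa using huv
    exact h ⟨(u : ℕ), by omega⟩ hj
  · intro h j hj
    have hjv : (j : ℕ) < (t0 : ℕ) := by rw [Fin.lt_def] at hj; simpa using hj
    apply h (Fin.castLE t0.isLt j)
    rw [Fin.lt_def]
    simpa using hjv

lemma P1_Aact (M : MDP S A) {π : S → A → ℝ} (hπ : IsPolicy π) (s : S) (a : A) (t0 : Fin H) :
    P1 M π (Aact s a t0) = π s a * ∑ ρ : Fin (t0 : ℕ) → S × A, fvW M π s ρ := by
  unfold P1
  have h1 : ∀ τ : Fin H → S × A,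
      Set.indicator (Aact s a t0) (trajP M π) τ
        = trajP M π τ *
            (if ((τ (Fin.castLE t0.isLt (Fin.last (t0 : ℕ)))).1 = s ∧
                (τ (Fin.castLE t0.isLt (Fin.last (t0 : ℕ)))).2 = a ∧
                ∀ j : Fin ((t0 : ℕ)+1), j < Fin.last (t0 : ℕ) →
                  (τ (Fin.castLE t0.isLt j)).1 ≠ s) then (1:ℝ) else 0) := by
    intro τ
    rw [Set.indicator_apply]
    have hiff : τ ∈ Aact s a t0 ↔
        ((τ (Fin.castLE t0.isLt (Fin.last (t0 : ℕ)))).1 = s ∧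
          (τ (Fin.castLE t0.isLt (Fin.last (t0 : ℕ)))).2 = a ∧
          ∀ j : Fin ((t0 : ℕ)+1), j < Fin.last (t0 : ℕ) →
            (τ (Fin.castLE t0.isLt j)).1 ≠ s) :=
      and_congr Iff.rfl (and_congr Iff.rfl (restrict_cond_iff τ t0).symm)
    by_cases hm : τ ∈ Aact s a t0
    · rw [if_pos hm, if_pos (hiff.mp hm), mul_one]
    · rw [if_neg hm, if_neg (fun hc => hm (hiff.mpr hc)), mul_zero]
  rw [Finset.sum_congr rfl (fun τ _ => h1 τ)]
  have hso := sum_out M hπ H ((t0 : ℕ)+1) (Nat.succ_pos _) t0.isLt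
      (fun σ : Fin ((t0 : ℕ)+1) → S × A =>
        if ((σ (Fin.last (t0 : ℕ))).1 = s ∧ (σ (Fin.last (t0 : ℕ))).2 = a ∧
            ∀ j : Fin ((t0 : ℕ)+1), j < Fin.last (t0 : ℕ) → (σ j).1 ≠ s) then (1:ℝ) else 0)
  rw [hso]
  exact core_sa M hπ s a (t0 : ℕ)

lemma P1_Afin (M : MDP S A) {π : S → A → ℝ} (hπ : IsPolicy π) (s : S) (t0 : Fin H) :
    P1 M π (Afin s t0) = ∑ ρ : Fin (t0 : ℕ) → S × A, fvW M π s ρ := by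
  unfold P1
  have h1 : ∀ τ : Fin H → S × A,
      Set.indicator (Afin s t0) (trajP M π) τ
        = trajP M π τ *
            (if ((τ (Fin.castLE t0.isLt (Fin.last (t0 : ℕ)))).1 = s ∧
                ∀ j : Fin ((t0 : ℕ)+1), j < Fin.last (t0 : ℕ) →
                  (τ (Fin.castLE t0.isLt j)).1 ≠ s) then (1:ℝ) else 0) := by
    intro τ
    rw [Set.indicator_apply]
    have hiff : τ ∈ Afin s t0 ↔
        ((τ (Fin.castLE t0.isLt (Fin.last (t0 : ℕ)))).1 = s ∧
          ∀ j : Fin ((t0 : ℕ)+1), j < Fin.last (t0 : ℕ) →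
            (τ (Fin.castLE t0.isLt j)).1 ≠ s) :=
      and_congr Iff.rfl (restrict_cond_iff τ t0).symm
    by_cases hm : τ ∈ Afin s t0
    · rw [if_pos hm, if_pos (hiff.mp hm), mul_one]
    · rw [if_neg hm, if_neg (fun hc => hm (hiff.mpr hc)), mul_zero]
  rw [Finset.sum_congr rfl (fun τ _ => h1 τ)]
  have hso := sum_out M hπ H ((t0 : ℕ)+1) (Nat.succ_pos _) t0.isLt
      (fun σ : Fin ((t0 : ℕ)+1) → S × A =>
        if ((σ (Fin.last (t0 : ℕ))).1 = s ∧
            ∀ j : Fin ((t0 : ℕ)+1), j < Fin.last (t0 : ℕ) → (σ j).1 ≠ s) then (1:ℝ) else 0)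
  rw [hso]
  exact core_s M hπ s (t0 : ℕ)

lemma ind_dec_sa (s : S) (a : A) (f : (Fin H → S × A) → ℝ) (τ : Fin H → S × A) :
    Set.indicator (Esa s a) f τ = ∑ t0 : Fin H, Set.indicator (Aact s a t0) f τ := by
  by_cases hm : τ ∈ Esa s a
  · have hmem := hm
    obtain ⟨t, h1, h2, h3⟩ := hm
    have hAt : τ ∈ Aact s a t := ⟨h1, h2, h3⟩
    calc Set.indicator (Esa s a) f τ = f τ := Set.indicator_of_mem hmem f
      _ = Set.indicator (Aact s a t) f τ := (Set.indicator_of_mem hAt f).symm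
      _ = ∑ t0 : Fin H, Set.indicator (Aact s a t0) f τ := by
          symm
          apply Finset.sum_eq_single t
          · intro t' _ hne
            apply Set.indicator_of_notMem
            intro hm'
            obtain ⟨h1', h2', h3'⟩ := hm'
            exact hne (first_unique h1' h3' h1 h3)
          · intro hcon
            exact absurd (Finset.mem_univ t) hcon
  · have hz : ∀ t0 : Fin H, Set.indicator (Aact s a t0) f τ = 0 := by
      intro t0
      apply Set.indicator_of_notMem
      intro hm'
      obtain ⟨h1', h2', h3'⟩ := hm'
      exact hm ⟨t0, h1', h2', h3'⟩
    rw [Set.indicator_of_notMem hm]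
    rw [Finset.sum_congr rfl (fun t0 _ => hz t0)]
    simp

lemma ind_dec_s (s : S) (f : (Fin H → S × A) → ℝ) (τ : Fin H → S × A) :
    Set.indicator (Es s) f τ = ∑ t0 : Fin H, Set.indicator (Afin s t0) f τ := by
  by_cases hm : τ ∈ Es s
  · obtain ⟨t, h1, h3⟩ := exists_first hm
    have hAt : τ ∈ Afin s t := ⟨h1, h3⟩
    calc Set.indicator (Es s) f τ = f τ := Set.indicator_of_mem hm f
      _ = Set.indicator (Afin s t) f τ := (Set.indicator_of_mem hAt f).symm
      _ = ∑ t0 : Fin H, Set.indicator (Afin s t0) f τ := by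
          symm
          apply Finset.sum_eq_single t
          · intro t' _ hne
            apply Set.indicator_of_notMem
            intro hm'
            obtain ⟨h1', h3'⟩ := hm'
            exact hne (first_unique h1' h3' h1 h3)
          · intro hcon
            exact absurd (Finset.mem_univ t) hcon
  · have hz : ∀ t0 : Fin H, Set.indicator (Afin s t0) f τ = 0 := by
      intro t0
      apply Set.indicator_of_notMem
      intro hm'
      obtain ⟨h1', h3'⟩ := hm'
      exact hm ⟨t0, h1'⟩
    rw [Set.indicator_of_notMem hm]
    rw [Finset.sum_congr rfl (fun t0 _ => hz t0)]
    simp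

lemma P1_Esa (M : MDP S A) {π : S → A → ℝ} (hπ : IsPolicy π) (s : S) (a : A) :
    P1 M π (Esa (H := H) s a) = π s a * P1 M π (Es (H := H) s) := by
  have h1 : P1 M π (Esa (H := H) s a) = ∑ t0 : Fin H, P1 M π (Aact s a t0) := by
    unfold P1
    rw [Finset.sum_congr rfl (fun τ _ => ind_dec_sa s a (trajP M π) τ)]
    exact Finset.sum_comm
  have h2 : P1 M π (Es (H := H) s) = ∑ t0 : Fin H, P1 M π (Afin s t0) := by
    unfold P1
    rw [Finset.sum_congr rfl (fun τ _ => ind_dec_s s (trajP M π) τ)]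
    exact Finset.sum_comm
  rw [h1, h2, Finset.mul_sum]
  apply Finset.sum_congr rfl
  intro t0 _
  rw [P1_Aact M hπ, P1_Afin M hπ]

lemma visitP_eq_P1 (M : MDP S A) (π : S → A → ℝ) (s : S) :
    visitP M π H s = P1 M π (Es (H := H) s) := rfl

end Aux5
section Aux6
set_option linter.unusedSectionVars false
set_option maxHeartbeats 1000000
open Classical
variable {S A : Type} [Fintype S] [Fintype A] [DecidableEq S] [DecidableEq A]
variable {N H : ℕ}

/-- number of trajectories in a dataset satisfying an event -/
noncomputable def cnt (e : Set (Fin H → S × A)) (D : Fin N → Fin H → S × A) : ℕ :=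
  (Finset.univ.filter fun i => D i ∈ e).card

lemma NsaCount_eq (D : Fin N → Fin H → S × A) (s : S) (a : A) :
    NsaCount D s a = cnt (Esa s a) D := by
  unfold NsaCount cnt
  congr 1
  ext i
  simp only [Finset.mem_filter, Finset.mem_univ, true_and]
  exact Iff.rfl

lemma NsCount_eq (D : Fin N → Fin H → S × A) (s : S) :
    NsCount D s = cnt (Es s) D := by
  unfold NsCount
  rw [Finset.sum_congr rfl (fun a _ => NsaCount_eq D s a)]
  unfold cnt
  rw [Finset.card_filter]
  rw [Finset.sum_congr rfl (fun a (_ : a ∈ Finset.univ) => Finset.card_filter _ _)]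
  rw [Finset.sum_comm]
  apply Finset.sum_congr rfl
  intro i _
  by_cases hm : D i ∈ Es s
  · rw [if_pos hm]
    obtain ⟨t0, h1, h3⟩ := exists_first hm
    rw [Finset.sum_eq_single ((D i t0).2)]
    · rw [if_pos ⟨t0, h1, rfl, h3⟩]
    · intro a _ hne
      rw [if_neg]
      intro hm'
      obtain ⟨t, h1', h2', h3'⟩ := hm'
      have ht : t = t0 := first_unique h1' h3' h1 h3
      subst ht
      exact hne h2'.symm
    · intro hcon
      exact absurd (Finset.mem_univ _) hcon
  · rw [if_neg hm]
    apply Finset.sum_eq_zero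
    intro a _
    rw [if_neg]
    intro hm'
    obtain ⟨t, h1', _, _⟩ := hm'
    exact hm ⟨t, h1'⟩

lemma dataP_nonneg (M : MDP S A) {π : S → A → ℝ} (hπ : IsPolicy π)
    (D : Fin N → Fin H → S × A) : 0 ≤ dataP M π D :=
  Finset.prod_nonneg (fun i _ => trajP_nonneg M hπ (D i))

lemma dataP_sum_one (M : MDP S A) {π : S → A → ℝ} (hπ : IsPolicy π) (hH : 0 < H) :
    ∑ D : Fin N → Fin H → S × A, dataP M π D = 1 := by
  unfold dataP
  have h := Finset.prod_univ_sum (fun _ : Fin N => (Finset.univ : Finset (Fin H → S × A)))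
    (fun _ τ => trajP M π τ)
  rw [Fintype.piFinset_univ] at h
  rw [← h]
  rw [Finset.prod_congr rfl (fun i (_ : i ∈ Finset.univ) => trajP_sum_one M hπ hH)]
  simp

lemma mgf (M : MDP S A) {π : S → A → ℝ} (hπ : IsPolicy π) (hH : 0 < H)
    (e : Set (Fin H → S × A)) (θ : ℝ) :
    ∑ D : Fin N → Fin H → S × A, dataP M π D * Real.exp (θ * (cnt e D : ℝ))
      = (1 + P1 M π e * (Real.exp θ - 1)) ^ N := by
  have hterm : ∀ D : Fin N → Fin H → S × A,
      dataP M π D * Real.exp (θ * (cnt e D : ℝ))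
        = ∏ i, (trajP M π (D i) * (if D i ∈ e then Real.exp θ else 1)) := by
    intro D
    unfold dataP cnt
    rw [Finset.card_filter]
    push_cast
    rw [Finset.mul_sum, Real.exp_sum, ← Finset.prod_mul_distrib]
    apply Finset.prod_congr rfl
    intro i _
    congr 1
    by_cases hi : D i ∈ e
    · rw [if_pos hi, if_pos hi, mul_one]
    · rw [if_neg hi, if_neg hi, mul_zero, Real.exp_zero]
  rw [Finset.sum_congr rfl (fun D _ => hterm D)]
  have h := Finset.prod_univ_sum (fun _ : Fin N => (Finset.univ : Finset (Fin H → S × A)))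
    (fun _ τ => trajP M π τ * (if τ ∈ e then Real.exp θ else 1))
  rw [Fintype.piFinset_univ] at h
  rw [← h]
  have hone : ∑ τ : Fin H → S × A, trajP M π τ * (if τ ∈ e then Real.exp θ else 1)
      = 1 + P1 M π e * (Real.exp θ - 1) := by
    have hsplit : ∀ τ : Fin H → S × A,
        trajP M π τ * (if τ ∈ e then Real.exp θ else 1)
          = trajP M π τ + Set.indicator e (trajP M π) τ * (Real.exp θ - 1) := by
      intro τ
      rw [Set.indicator_apply]
      by_cases hi : τ ∈ e
      · rw [if_pos hi, if_pos hi]; ring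
      · rw [if_neg hi, if_neg hi]; ring
    rw [Finset.sum_congr rfl (fun τ _ => hsplit τ)]
    rw [Finset.sum_add_distrib, trajP_sum_one M hπ hH, ← Finset.sum_mul]
    rfl
  rw [Finset.prod_congr rfl (fun i (_ : i ∈ Finset.univ) => hone)]
  simp [Finset.prod_const]

lemma PrD_mono (M : MDP S A) {π : S → A → ℝ} (hπ : IsPolicy π)
    {e e' : Set (Fin N → Fin H → S × A)} (h : e ⊆ e') : PrD M π e ≤ PrD M π e' := by
  apply Finset.sum_le_sum
  intro D _
  rw [Set.indicator_apply, Set.indicator_apply]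
  split
  · next hm => rw [if_pos (h hm)]
  · split
    · exact dataP_nonneg M hπ D
    · exact le_refl 0

lemma PrD_compl (M : MDP S A) {π : S → A → ℝ} (hπ : IsPolicy π) (hH : 0 < H)
    (e : Set (Fin N → Fin H → S × A)) : PrD M π eᶜ = 1 - PrD M π e := by
  have h : PrD M π eᶜ + PrD M π e = 1 := by
    unfold PrD
    rw [← Finset.sum_add_distrib]
    rw [← dataP_sum_one M hπ hH (N := N)]
    apply Finset.sum_congr rfl
    intro D _
    rw [Set.indicator_apply, Set.indicator_apply]
    by_cases hm : D ∈ e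
    · rw [if_pos hm, if_neg (fun (hc : D ∈ eᶜ) => hc hm), zero_add]
    · rw [if_neg hm, if_pos (Set.mem_compl hm), add_zero]
  linarith

lemma PrD_iUnion_le (M : MDP S A) {π : S → A → ℝ} (hπ : IsPolicy π)
    {ι : Type} [Fintype ι] (f : ι → Set (Fin N → Fin H → S × A)) :
    PrD M π (⋃ i, f i) ≤ ∑ i, PrD M π (f i) := by
  unfold PrD
  rw [Finset.sum_comm]
  apply Finset.sum_le_sum
  intro D _
  by_cases hD : D ∈ ⋃ i, f i
  · rw [Set.indicator_of_mem hD]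
    obtain ⟨i0, hi0⟩ := Set.mem_iUnion.mp hD
    calc dataP M π D = Set.indicator (f i0) (dataP M π) D := (Set.indicator_of_mem hi0 _).symm
      _ ≤ ∑ i, Set.indicator (f i) (dataP M π) D := by
          apply Finset.single_le_sum (f := fun i => Set.indicator (f i) (dataP M π) D)
            (fun i _ => Set.indicator_nonneg (fun x _ => dataP_nonneg M hπ x) D)
            (Finset.mem_univ i0)
  · rw [Set.indicator_of_notMem hD]
    apply Finset.sum_nonneg
    intro i _
    exact Set.indicator_nonneg (fun x _ => dataP_nonneg M hπ x) D

lemma markov_upper (M : MDP S A) {π : S → A → ℝ} (hπ : IsPolicy π) (hH : 0 < H)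
    (e : Set (Fin H → S × A)) {θ : ℝ} (hθ : 0 ≤ θ) (x : ℝ) :
    PrD M π {D : Fin N → Fin H → S × A | x ≤ (cnt e D : ℝ)}
      ≤ Real.exp (-θ * x) * (1 + P1 M π e * (Real.exp θ - 1)) ^ N := by
  rw [← mgf M hπ hH e θ, Finset.mul_sum]
  apply Finset.sum_le_sum
  intro D _
  rw [Set.indicator_apply]
  split
  · next hD =>
    have hD' : x ≤ (cnt e D : ℝ) := hD
    have h1 : (1:ℝ) ≤ Real.exp (-θ * x) * Real.exp (θ * (cnt e D : ℝ)) := by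
      rw [← Real.exp_add]
      have heq : -θ * x + θ * (cnt e D : ℝ) = θ * ((cnt e D : ℝ) - x) := by ring
      rw [heq]
      have h2 : 0 ≤ θ * ((cnt e D : ℝ) - x) := mul_nonneg hθ (by linarith)
      calc (1:ℝ) = Real.exp 0 := Real.exp_zero.symm
        _ ≤ _ := Real.exp_le_exp.mpr h2
    calc dataP M π D = dataP M π D * 1 := (mul_one _).symm
      _ ≤ dataP M π D * (Real.exp (-θ * x) * Real.exp (θ * (cnt e D : ℝ))) :=
          mul_le_mul_of_nonneg_left h1 (dataP_nonneg M hπ D)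
      _ = Real.exp (-θ * x) * (dataP M π D * Real.exp (θ * (cnt e D : ℝ))) := by ring
  · exact mul_nonneg (Real.exp_pos _).le
      (mul_nonneg (dataP_nonneg M hπ _) (Real.exp_pos _).le)

lemma markov_lower (M : MDP S A) {π : S → A → ℝ} (hπ : IsPolicy π) (hH : 0 < H)
    (e : Set (Fin H → S × A)) {θ : ℝ} (hθ : 0 ≤ θ) (x : ℝ) :
    PrD M π {D : Fin N → Fin H → S × A | (cnt e D : ℝ) ≤ x}
      ≤ Real.exp (θ * x) * (1 + P1 M π e * (Real.exp (-θ) - 1)) ^ N := by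
  rw [← mgf M hπ hH e (-θ), Finset.mul_sum]
  apply Finset.sum_le_sum
  intro D _
  rw [Set.indicator_apply]
  split
  · next hD =>
    have hD' : (cnt e D : ℝ) ≤ x := hD
    have h1 : (1:ℝ) ≤ Real.exp (θ * x) * Real.exp (-θ * (cnt e D : ℝ)) := by
      rw [← Real.exp_add]
      have heq : θ * x + -θ * (cnt e D : ℝ) = θ * (x - (cnt e D : ℝ)) := by ring
      rw [heq]
      have h2 : 0 ≤ θ * (x - (cnt e D : ℝ)) := mul_nonneg hθ (by linarith)
      calc (1:ℝ) = Real.exp 0 := Real.exp_zero.symm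
        _ ≤ _ := Real.exp_le_exp.mpr h2
    calc dataP M π D = dataP M π D * 1 := (mul_one _).symm
      _ ≤ dataP M π D * (Real.exp (θ * x) * Real.exp (-θ * (cnt e D : ℝ))) :=
          mul_le_mul_of_nonneg_left h1 (dataP_nonneg M hπ D)
      _ = Real.exp (θ * x) * (dataP M π D * Real.exp (-θ * (cnt e D : ℝ))) := by ring
  · exact mul_nonneg (Real.exp_pos _).le
      (mul_nonneg (dataP_nonneg M hπ _) (Real.exp_pos _).le)

lemma one_add_pow_le_exp (y : ℝ) (h : 0 ≤ 1 + y) (n : ℕ) :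
    (1 + y) ^ n ≤ Real.exp (n * y) := by
  calc (1 + y) ^ n ≤ (Real.exp y) ^ n := by
        apply pow_le_pow_left₀ h
        linarith [Real.add_one_le_exp y]
    _ = Real.exp (n * y) := (Real.exp_nat_mul y n).symm

lemma exp_cubic_bound {c : ℝ} (hc0 : 0 < c) (hc1 : c ≤ 1) :
    Real.exp c ≤ 1 + c + c^2/2 + (2/9) * c^3 := by
  have hb := Real.exp_bound (x := c) (by rw [abs_of_pos hc0]; linarith) (n := 3) (by norm_num)
  rw [abs_of_pos hc0] at hb
  have hsum : ∑ m ∈ Finset.range 3, c ^ m / (m.factorial : ℝ) = 1 + c + c^2/2 := by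
    rw [Finset.sum_range_succ, Finset.sum_range_succ, Finset.sum_range_succ]
    norm_num [Nat.factorial]
  rw [hsum] at hb
  have h49 : ((3:ℕ).succ : ℝ) / (((3:ℕ).factorial : ℝ) * (3:ℕ)) = 2/9 := by
    norm_num [Nat.factorial]
  rw [h49] at hb
  have := abs_le.mp hb
  linarith [this.2]

lemma exp_neg_cubic_bound {c : ℝ} (hc0 : 0 < c) (hc1 : c ≤ 1) :
    Real.exp (-c) ≤ 1 - c + c^2/2 + (2/9) * c^3 := by
  have hb := Real.exp_bound (x := -c) (by rw [abs_neg, abs_of_pos hc0]; linarith) (n := 3)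
    (by norm_num)
  rw [abs_neg, abs_of_pos hc0] at hb
  have hsum : ∑ m ∈ Finset.range 3, (-c) ^ m / (m.factorial : ℝ) = 1 - c + c^2/2 := by
    rw [Finset.sum_range_succ, Finset.sum_range_succ, Finset.sum_range_succ]
    norm_num [Nat.factorial]
    ring
  rw [hsum] at hb
  have h49 : ((3:ℕ).succ : ℝ) / (((3:ℕ).factorial : ℝ) * (3:ℕ)) = 2/9 := by
    norm_num [Nat.factorial]
  rw [h49] at hb
  have := abs_le.mp hb
  linarith [this.2]

lemma chernoff_high (M : MDP S A) {π : S → A → ℝ} (hπ : IsPolicy π) (hH : 0 < H)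
    (e : Set (Fin H → S × A)) {c : ℝ} (hc0 : 0 < c) (hc5 : c ≤ 1/5) :
    PrD M π {D : Fin N → Fin H → S × A | (1+c) * ((N : ℝ) * P1 M π e) ≤ (cnt e D : ℝ)}
      ≤ Real.exp (-(41/90) * c^2 * ((N : ℝ) * P1 M π e)) := by
  set p := P1 M π e with hp
  have hp0 : 0 ≤ p := P1_nonneg M hπ e
  have hp1 : p ≤ 1 := P1_le_one M hπ hH e
  have h := markov_upper (N := N) M hπ hH e hc0.le ((1+c) * ((N : ℝ) * p))
  refine le_trans h ?_
  have hexp1 : (1:ℝ) ≤ Real.exp c := by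
    rw [← Real.exp_zero]
    exact Real.exp_le_exp.mpr hc0.le
  have hbase : 0 ≤ 1 + p * (Real.exp c - 1) := by nlinarith
  calc Real.exp (-c * ((1+c) * ((N : ℝ) * p))) * (1 + p * (Real.exp c - 1)) ^ N
      ≤ Real.exp (-c * ((1+c) * ((N : ℝ) * p))) * Real.exp ((N : ℝ) * (p * (Real.exp c - 1))) := by
        apply mul_le_mul_of_nonneg_left (one_add_pow_le_exp _ hbase N) (Real.exp_pos _).le
    _ = Real.exp ((N : ℝ) * p * (Real.exp c - 1 - c * (1+c))) := by
        rw [← Real.exp_add]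
        congr 1
        ring
    _ ≤ Real.exp (-(41/90) * c^2 * ((N : ℝ) * p)) := by
        apply Real.exp_le_exp.mpr
        have hec := exp_cubic_bound hc0 (by linarith)
        have hNp : 0 ≤ (N : ℝ) * p := mul_nonneg (Nat.cast_nonneg N) hp0
        have hkey : Real.exp c - 1 - c * (1+c) ≤ -(41/90) * c^2 := by nlinarith
        nlinarith

lemma chernoff_low (M : MDP S A) {π : S → A → ℝ} (hπ : IsPolicy π) (hH : 0 < H)
    (e : Set (Fin H → S × A)) {c : ℝ} (hc0 : 0 < c) (hc5 : c ≤ 1/5) :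
    PrD M π {D : Fin N → Fin H → S × A | (cnt e D : ℝ) ≤ (1-c) * ((N : ℝ) * P1 M π e)}
      ≤ Real.exp (-(41/90) * c^2 * ((N : ℝ) * P1 M π e)) := by
  set p := P1 M π e with hp
  have hp0 : 0 ≤ p := P1_nonneg M hπ e
  have hp1 : p ≤ 1 := P1_le_one M hπ hH e
  have h := markov_lower (N := N) M hπ hH e hc0.le ((1-c) * ((N : ℝ) * p))
  refine le_trans h ?_
  have hexp1 : 0 < Real.exp (-c) := Real.exp_pos _
  have hexp2 : Real.exp (-c) ≤ 1 := by
    rw [← Real.exp_zero]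
    apply Real.exp_le_exp.mpr
    linarith
  have hbase : 0 ≤ 1 + p * (Real.exp (-c) - 1) := by nlinarith
  calc Real.exp (c * ((1-c) * ((N : ℝ) * p))) * (1 + p * (Real.exp (-c) - 1)) ^ N
      ≤ Real.exp (c * ((1-c) * ((N : ℝ) * p))) * Real.exp ((N : ℝ) * (p * (Real.exp (-c) - 1))) := by
        apply mul_le_mul_of_nonneg_left (one_add_pow_le_exp _ hbase N) (Real.exp_pos _).le
    _ = Real.exp ((N : ℝ) * p * (Real.exp (-c) - 1 + c * (1-c))) := by
        rw [← Real.exp_add]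
        congr 1
        ring
    _ ≤ Real.exp (-(41/90) * c^2 * ((N : ℝ) * p)) := by
        apply Real.exp_le_exp.mpr
        have hec := exp_neg_cubic_bound hc0 (by linarith)
        have hNp : 0 ≤ (N : ℝ) * p := mul_nonneg (Nat.cast_nonneg N) hp0
        have hkey : Real.exp (-c) - 1 + c * (1-c) ≤ -(41/90) * c^2 := by nlinarith
        nlinarith

end Aux6
section Aux7
set_option linter.unusedSectionVars false
set_option maxHeartbeats 1000000
open Classical
variable {S A : Type} [Fintype S] [Fintype A] [DecidableEq S] [DecidableEq A]

lemma log_close {x y R : ℝ} (hy : 0 < y) (hR : 1 ≤ R) (h1 : y / R ≤ x) (h2 : x ≤ y * R) :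
    |Real.log x - Real.log y| ≤ Real.log R := by
  have hR0 : 0 < R := lt_of_lt_of_le one_pos hR
  have hx : 0 < x := lt_of_lt_of_le (div_pos hy hR0) h1
  rw [abs_le]
  constructor
  · have hlo := Real.log_le_log (div_pos hy hR0) h1
    rw [Real.log_div hy.ne' (ne_of_gt hR0)] at hlo
    linarith
  · have hhi := Real.log_le_log hx h2
    rw [Real.log_mul hy.ne' (ne_of_gt hR0)] at hhi
    linarith

lemma logR_le {c : ℝ} (hc0 : 0 < c) (hc5 : c ≤ 1/5) :
    Real.log ((1+c)/(1-c)) ≤ (9/4) * c := by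
  have h1c : 0 < 1 - c := by linarith
  have h1c' : 0 < 1 + c := by linarith
  rw [Real.log_div (ne_of_gt h1c') (ne_of_gt h1c)]
  have ha : Real.log (1+c) ≤ c := by
    have := Real.log_le_sub_one_of_pos h1c'
    linarith
  have hb : -Real.log (1-c) ≤ (5/4) * c := by
    rw [← Real.log_inv]
    have hpos : 0 < (1-c)⁻¹ := inv_pos.mpr h1c
    have := Real.log_le_sub_one_of_pos hpos
    have hinv : (1-c)⁻¹ ≤ 1 + (5/4)*c := by
      rw [inv_eq_one_div, div_le_iff₀ h1c]
      nlinarith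
    linarith
  linarith

lemma det_bound [Nonempty A] {c πmin' ε : ℝ} (hc0 : 0 < c) (hc5 : c ≤ 1/5)
    (hπmin' : 0 < πmin') (hce : c = ε/5)
    (q : A → ℝ) (hql : ∀ a', πmin' ≤ q a')
    (f : A → ℝ) (hfmin : ∀ a', πmin' ≤ f a')
    (hf1 : ∀ a', q a' / ((1+c)/(1-c)) ≤ f a')
    (hf2 : ∀ a', f a' ≤ q a' * ((1+c)/(1-c)))
    (a : A) :
    |Real.log (f a / ⨆ a', f a') - Real.log (q a / ⨆ a', q a')| ≤ ε := by
  have h1c : 0 < 1 - c := by linarith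
  have h1c' : 0 < 1 + c := by linarith
  set R := (1+c)/(1-c) with hRdef
  have hR0 : 0 < R := div_pos h1c' h1c
  have hR1 : 1 ≤ R := by
    rw [hRdef, le_div_iff₀ h1c]
    linarith
  have hfpos : ∀ a', 0 < f a' := fun a' => lt_of_lt_of_le hπmin' (hfmin a')
  have hqpos : ∀ a', 0 < q a' := fun a' => lt_of_lt_of_le hπmin' (hql a')
  have hbddf : BddAbove (Set.range f) := Set.Finite.bddAbove (Set.finite_range f)
  have hbddq : BddAbove (Set.range q) := Set.Finite.bddAbove (Set.finite_range q)
  have hFpos : 0 < ⨆ a', f a' := lt_of_lt_of_le (hfpos a) (le_ciSup hbddf a)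
  have hQpos : 0 < ⨆ a', q a' := lt_of_lt_of_le (hqpos a) (le_ciSup hbddq a)
  have hsup_up : (⨆ a', f a') ≤ (⨆ a', q a') * R := by
    apply ciSup_le
    intro a'
    calc f a' ≤ q a' * R := hf2 a'
      _ ≤ (⨆ a', q a') * R := mul_le_mul_of_nonneg_right (le_ciSup hbddq a') hR0.le
  have hsup_lo : (⨆ a', q a') / R ≤ ⨆ a', f a' := by
    rw [div_le_iff₀ hR0]
    apply ciSup_le
    intro a'
    calc q a' ≤ f a' * R := by
          have := hf1 a'
          rw [div_le_iff₀ hR0] at this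
          linarith
      _ ≤ (⨆ a', f a') * R := mul_le_mul_of_nonneg_right (le_ciSup hbddf a') hR0.le
  have habs1 : |Real.log (f a) - Real.log (q a)| ≤ Real.log R :=
    log_close (hqpos a) hR1 (by rw [div_eq_mul_inv] at *; exact hf1 a) (hf2 a)
  have habs2 : |Real.log (⨆ a', f a') - Real.log (⨆ a', q a')| ≤ Real.log R :=
    log_close hQpos hR1 hsup_lo hsup_up
  have hlogR : Real.log R ≤ (9/4) * c := logR_le hc0 hc5
  rw [Real.log_div (ne_of_gt (hfpos a)) (ne_of_gt hFpos),
    Real.log_div (ne_of_gt (hqpos a)) (ne_of_gt hQpos)]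
  have hsplit : |Real.log (f a) - Real.log (⨆ a', f a') -
      (Real.log (q a) - Real.log (⨆ a', q a'))|
      = |(Real.log (f a) - Real.log (q a)) +
          -(Real.log (⨆ a', f a') - Real.log (⨆ a', q a'))| := by
    congr 1
    ring
  rw [hsplit]
  calc |(Real.log (f a) - Real.log (q a)) +
        -(Real.log (⨆ a', f a') - Real.log (⨆ a', q a'))|
      ≤ |Real.log (f a) - Real.log (q a)| +
          |-(Real.log (⨆ a', f a') - Real.log (⨆ a', q a'))| := abs_add_le _ _
    _ = |Real.log (f a) - Real.log (q a)| +
          |Real.log (⨆ a', f a') - Real.log (⨆ a', q a')| := by rw [abs_neg]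
    _ ≤ Real.log R + Real.log R := add_le_add habs1 habs2
    _ ≤ (9/2) * c := by linarith
    _ ≤ ε := by rw [hce]; linarith

end Aux7
section Aux8
set_option linter.unusedSectionVars false
set_option maxHeartbeats 2000000
open Classical
variable {S A : Type} [Fintype S] [Fintype A] [DecidableEq S] [DecidableEq A]
variable {N H : ℕ}

lemma PrD_union_le (M : MDP S A) {π : S → A → ℝ} (hπ : IsPolicy π)
    (e e' : Set (Fin N → Fin H → S × A)) :
    PrD M π (e ∪ e') ≤ PrD M π e + PrD M π e' := by
  unfold PrD
  rw [← Finset.sum_add_distrib]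
  apply Finset.sum_le_sum
  intro D _
  rw [Set.indicator_apply, Set.indicator_apply, Set.indicator_apply]
  by_cases h1 : D ∈ e
  · rw [if_pos h1, if_pos (Set.mem_union_left _ h1)]
    split
    · linarith [dataP_nonneg M hπ D]
    · linarith
  · rw [if_neg h1, zero_add]
    by_cases h2 : D ∈ e'
    · rw [if_pos h2, if_pos (Set.mem_union_right _ h2)]
    · rw [if_neg h2]
      split
      · exact absurd (by assumption : D ∈ e ∪ e') (by simp [h1, h2])
      · exact le_refl 0
end Aux8
set_option maxHeartbeats 4000000 in
open Classical in
/-- sample complexity of estimating the BIRL reward centroid. -/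
theorem statement13 {S A : Type} [Fintype S] [Fintype A] [DecidableEq S] [DecidableEq A]
    [Nonempty A]
    (M : MDP S A) (πE : S → A → ℝ) (hπE : IsPolicy πE) (hsupp : supp M πE = Set.univ)
    (πmin' : ℝ) (hπmin' : 0 < πmin') (hlb : ∀ s a, πmin' ≤ πE s a)
    (ε δ : ℝ) (hε : ε ∈ Set.Ioo (0 : ℝ) 1) (hδ : δ ∈ Set.Ioo (0 : ℝ) 1)
    (N H : ℕ) (hH : Fintype.card S ≤ H)
    (hN : 33 * Real.log (8 * (Fintype.card S : ℝ) * (Fintype.card A : ℝ) / δ) ^ 2 /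
        (ε ^ 2 * πmin' * pminH M πE H) ≤ (N : ℝ)) :
    1 - δ ≤ PrD M πE {D : Fin N → Fin H → S × A |
      ∀ s a,
        |(if 0 < NsCount D s then Real.log (pihat πmin' D s a / ⨆ a', pihat πmin' D s a')
          else Real.log πmin') - Real.log (πE s a / ⨆ a', πE s a')| ≤ ε} := by
  obtain ⟨hε0, hε1⟩ := hε
  obtain ⟨hδ0, hδ1⟩ := hδ
  have hSne : Nonempty S := ⟨M.s0⟩
  have hcardS : 0 < Fintype.card S := Fintype.card_pos_iff.mpr hSne
  have hcardA : 0 < Fintype.card A := Fintype.card_pos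
  have hH0 : 0 < H := lt_of_lt_of_le hcardS hH
  set c : ℝ := ε/5 with hc
  have hc0 : 0 < c := by rw [hc]; linarith
  have hc5 : c ≤ 1/5 := by rw [hc]; linarith
  set pm := pminH M πE H with hpm
  have hpm0 : 0 < pm := pminH_pos M hπE hH hsupp
  have hv : ∀ s : S, pm ≤ visitP M πE H s := fun s =>
    pminH_le M πE H (by rw [hsupp]; trivial)
  have hvpos : ∀ s : S, 0 < visitP M πE H s := fun s => lt_of_lt_of_le hpm0 (hv s)
  have hπle1 : πmin' ≤ 1 := le_trans (hlb M.s0 (Classical.arbitrary A)) (policy_le_one hπE _ _)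
  set Sr : ℝ := (Fintype.card S : ℝ) with hSr
  set Ar : ℝ := (Fintype.card A : ℝ) with hAr
  have hS1 : (1:ℝ) ≤ Sr := by rw [hSr]; exact_mod_cast hcardS
  have hA1 : (1:ℝ) ≤ Ar := by rw [hAr]; exact_mod_cast hcardA
  set L := Real.log (8 * Sr * Ar / δ) with hLdef
  have hargpos : 0 < 8 * Sr * Ar / δ := by positivity
  have hL2 : (2:ℝ) ≤ L := by
    rw [hLdef, Real.le_log_iff_exp_le hargpos]
    have h2 : Real.exp 2 = Real.exp 1 * Real.exp 1 := by
      rw [← Real.exp_add]; norm_num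
    have h1 := Real.exp_one_lt_d9
    have h8 : Real.exp 2 ≤ 8 := by nlinarith [Real.exp_pos 1]
    have harg8 : (8:ℝ) ≤ 8 * Sr * Ar / δ := by
      rw [le_div_iff₀ hδ0]
      nlinarith
    linarith
  have hLpos : 0 < L := by linarith
  have hdenpos : 0 < ε^2 * πmin' * pm := by positivity
  have hNkey : 33 * L^2 ≤ (N:ℝ) * (ε^2 * πmin' * pm) := by
    rw [div_le_iff₀ hdenpos] at hN
    linarith
  have hN0 : (0:ℝ) < (N:ℝ) := by nlinarith
  -- per-event probability bound
  have hKbound : ∀ p : ℝ, πmin' * pm ≤ p →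
      Real.exp (-(41/90) * c^2 * ((N:ℝ) * p)) ≤ δ / (4 * Sr * Ar) := by
    intro p hp
    have hc2 : c^2 = ε^2/25 := by rw [hc]; ring
    have hstep1 : (41/90) * c^2 * ((N:ℝ) * (πmin' * pm)) ≤ (41/90) * c^2 * ((N:ℝ) * p) := by
      apply mul_le_mul_of_nonneg_left _ (by positivity)
      exact mul_le_mul_of_nonneg_left hp (Nat.cast_nonneg N)
    have hstep2 : L ≤ (41/90) * c^2 * ((N:ℝ) * (πmin' * pm)) := by
      have h2 : (41/90) * c^2 * ((N:ℝ) * (πmin' * pm))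
          = (41/2250) * ((N:ℝ) * (ε^2 * πmin' * pm)) := by
        rw [hc2]; ring
      nlinarith [sq_nonneg L]
    have hK : L ≤ (41/90) * c^2 * ((N:ℝ) * p) := le_trans hstep2 hstep1
    have hexpL : Real.exp (-L) = δ / (8 * Sr * Ar) := by
      rw [hLdef, Real.exp_neg, Real.exp_log hargpos, inv_div]
    calc Real.exp (-(41/90) * c^2 * ((N:ℝ) * p)) ≤ Real.exp (-L) := by
          apply Real.exp_le_exp.mpr; linarith
      _ = δ / (8 * Sr * Ar) := hexpL
      _ ≤ δ / (4 * Sr * Ar) := by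
          apply div_le_div_of_nonneg_left hδ0.le (by positivity)
          nlinarith
  -- event probabilities
  have hEs_p : ∀ s : S, πmin' * pm ≤ P1 M πE (Es (H := H) s) := by
    intro s
    rw [← visitP_eq_P1]
    calc πmin' * pm ≤ 1 * pm := mul_le_mul_of_nonneg_right hπle1 hpm0.le
      _ = pm := one_mul pm
      _ ≤ visitP M πE H s := hv s
  have hEsa_p : ∀ (s : S) (a : A), πmin' * pm ≤ P1 M πE (Esa (H := H) s a) := by
    intro s a
    rw [P1_Esa M hπE, ← visitP_eq_P1]
    have h1 := hlb s a
    have h2 := hv s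
    nlinarith
  -- the bad events
  set B1 : S → Set (Fin N → Fin H → S × A) := fun s =>
    {D | (cnt (Es s) D : ℝ) ≤ (1-c) * ((N:ℝ) * P1 M πE (Es s))} with hB1
  set B2 : S → Set (Fin N → Fin H → S × A) := fun s =>
    {D | (1+c) * ((N:ℝ) * P1 M πE (Es s)) ≤ (cnt (Es s) D : ℝ)} with hB2
  set B3 : S × A → Set (Fin N → Fin H → S × A) := fun sa =>
    {D | (cnt (Esa sa.1 sa.2) D : ℝ) ≤ (1-c) * ((N:ℝ) * P1 M πE (Esa sa.1 sa.2))} with hB3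
  set B4 : S × A → Set (Fin N → Fin H → S × A) := fun sa =>
    {D | (1+c) * ((N:ℝ) * P1 M πE (Esa sa.1 sa.2)) ≤ (cnt (Esa sa.1 sa.2) D : ℝ)} with hB4
  set Bad := (⋃ s, B1 s) ∪ ((⋃ s, B2 s) ∪ ((⋃ sa, B3 sa) ∪ (⋃ sa, B4 sa))) with hBadDef
  have hβ := δ / (4 * Sr * Ar)
  -- probability of each union
  have hU1 : PrD M πE (⋃ s, B1 s) ≤ Sr * (δ / (4 * Sr * Ar)) := by
    calc PrD M πE (⋃ s, B1 s) ≤ ∑ s, PrD M πE (B1 s) := PrD_iUnion_le M hπE B1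
      _ ≤ Finset.univ.card • (δ / (4 * Sr * Ar)) := by
          apply Finset.sum_le_card_nsmul
          intro s _
          exact le_trans (chernoff_low M hπE hH0 (Es s) hc0 hc5) (hKbound _ (hEs_p s))
      _ = Sr * (δ / (4 * Sr * Ar)) := by
          rw [nsmul_eq_mul, Finset.card_univ, hSr]
  have hU2 : PrD M πE (⋃ s, B2 s) ≤ Sr * (δ / (4 * Sr * Ar)) := by
    calc PrD M πE (⋃ s, B2 s) ≤ ∑ s, PrD M πE (B2 s) := PrD_iUnion_le M hπE B2
      _ ≤ Finset.univ.card • (δ / (4 * Sr * Ar)) := by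
          apply Finset.sum_le_card_nsmul
          intro s _
          exact le_trans (chernoff_high M hπE hH0 (Es s) hc0 hc5) (hKbound _ (hEs_p s))
      _ = Sr * (δ / (4 * Sr * Ar)) := by
          rw [nsmul_eq_mul, Finset.card_univ, hSr]
  have hU3 : PrD M πE (⋃ sa, B3 sa) ≤ Sr * Ar * (δ / (4 * Sr * Ar)) := by
    calc PrD M πE (⋃ sa, B3 sa) ≤ ∑ sa, PrD M πE (B3 sa) := PrD_iUnion_le M hπE B3
      _ ≤ Finset.univ.card • (δ / (4 * Sr * Ar)) := by
          apply Finset.sum_le_card_nsmul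
          intro sa _
          exact le_trans (chernoff_low M hπE hH0 (Esa sa.1 sa.2) hc0 hc5)
            (hKbound _ (hEsa_p sa.1 sa.2))
      _ = Sr * Ar * (δ / (4 * Sr * Ar)) := by
          rw [nsmul_eq_mul, Finset.card_univ, Fintype.card_prod, hSr, hAr]
          push_cast
          ring
  have hU4 : PrD M πE (⋃ sa, B4 sa) ≤ Sr * Ar * (δ / (4 * Sr * Ar)) := by
    calc PrD M πE (⋃ sa, B4 sa) ≤ ∑ sa, PrD M πE (B4 sa) := PrD_iUnion_le M hπE B4
      _ ≤ Finset.univ.card • (δ / (4 * Sr * Ar)) := by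
          apply Finset.sum_le_card_nsmul
          intro sa _
          exact le_trans (chernoff_high M hπE hH0 (Esa sa.1 sa.2) hc0 hc5)
            (hKbound _ (hEsa_p sa.1 sa.2))
      _ = Sr * Ar * (δ / (4 * Sr * Ar)) := by
          rw [nsmul_eq_mul, Finset.card_univ, Fintype.card_prod, hSr, hAr]
          push_cast
          ring
  have hBad : PrD M πE Bad ≤ δ := by
    have h12 := PrD_union_le M hπE (⋃ sa, B3 sa) (⋃ sa, B4 sa)
    have h34 := PrD_union_le M hπE (⋃ s, B2 s) ((⋃ sa, B3 sa) ∪ (⋃ sa, B4 sa))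
    have htot := PrD_union_le M hπE (⋃ s, B1 s) ((⋃ s, B2 s) ∪ ((⋃ sa, B3 sa) ∪ (⋃ sa, B4 sa)))
    have hSA : 0 < 4 * Sr * Ar := by positivity
    have hfin : (2 * Sr + 2 * (Sr * Ar)) * (δ / (4 * Sr * Ar)) ≤ δ := by
      rw [div_eq_mul_inv]
      have hinv : 0 < (4 * Sr * Ar)⁻¹ := by positivity
      have hkey : (2 * Sr + 2 * (Sr * Ar)) ≤ 4 * Sr * Ar := by nlinarith
      calc (2 * Sr + 2 * (Sr * Ar)) * (δ * (4 * Sr * Ar)⁻¹)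
          ≤ 4 * Sr * Ar * (δ * (4 * Sr * Ar)⁻¹) := by
            apply mul_le_mul_of_nonneg_right hkey (by positivity)
        _ = δ := by field_simp
    calc PrD M πE Bad
        ≤ PrD M πE (⋃ s, B1 s) + (PrD M πE (⋃ s, B2 s) +
            (PrD M πE (⋃ sa, B3 sa) + PrD M πE (⋃ sa, B4 sa))) := by
          rw [hBadDef]
          linarith
      _ ≤ Sr * (δ / (4 * Sr * Ar)) + (Sr * (δ / (4 * Sr * Ar)) +
            (Sr * Ar * (δ / (4 * Sr * Ar)) + Sr * Ar * (δ / (4 * Sr * Ar)))) := by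
          linarith
      _ = (2 * Sr + 2 * (Sr * Ar)) * (δ / (4 * Sr * Ar)) := by ring
      _ ≤ δ := hfin
  -- inclusion of the good event
  have hincl : Badᶜ ⊆ {D : Fin N → Fin H → S × A |
      ∀ s a,
        |(if 0 < NsCount D s then Real.log (pihat πmin' D s a / ⨆ a', pihat πmin' D s a')
          else Real.log πmin') - Real.log (πE s a / ⨆ a', πE s a')| ≤ ε} := by
    intro D hD
    rw [Set.mem_compl_iff, hBadDef] at hD
    simp only [Set.mem_union, Set.mem_iUnion, not_or, not_exists] at hD
    obtain ⟨hD1, hD2, hD3, hD4⟩ := hD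
    simp only [Set.mem_setOf_eq]
    intro s a
    set v := visitP M πE H s with hvdef
    have hPEs : P1 M πE (Es (H := H) s) = v := (visitP_eq_P1 M πE s).symm
    have hPEsa : ∀ a' : A, P1 M πE (Esa (H := H) s a') = πE s a' * v := by
      intro a'
      rw [P1_Esa M hπE, ← visitP_eq_P1]
    -- count bounds
    have hns_lo : (1-c) * ((N:ℝ) * v) < (NsCount D s : ℝ) := by
      have h := hD1 s
      rw [hB1] at h
      simp only [Set.mem_setOf_eq, hPEs] at h
      rw [NsCount_eq]
      linarith [not_le.mp h]
    have hns_hi : (NsCount D s : ℝ) < (1+c) * ((N:ℝ) * v) := by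
      have h := hD2 s
      rw [hB2] at h
      simp only [Set.mem_setOf_eq, hPEs] at h
      rw [NsCount_eq]
      linarith [not_le.mp h]
    have hnsa_lo : ∀ a' : A, (1-c) * ((N:ℝ) * (πE s a' * v)) < (NsaCount D s a' : ℝ) := by
      intro a'
      have h := hD3 (s, a')
      rw [hB3] at h
      simp only [Set.mem_setOf_eq, hPEsa] at h
      rw [NsaCount_eq]
      linarith [not_le.mp h]
    have hnsa_hi : ∀ a' : A, (NsaCount D s a' : ℝ) < (1+c) * ((N:ℝ) * (πE s a' * v)) := by
      intro a'
      have h := hD4 (s, a')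
      rw [hB4] at h
      simp only [Set.mem_setOf_eq, hPEsa] at h
      rw [NsaCount_eq]
      linarith [not_le.mp h]
    have h1c : 0 < 1 - c := by linarith
    have h1c' : 0 < 1 + c := by linarith
    have hnspos : (0:ℝ) < (NsCount D s : ℝ) := by
      have : 0 < (1-c) * ((N:ℝ) * v) := by
        apply mul_pos h1c (mul_pos hN0 (hvpos s))
      linarith
    have hNsnat : 0 < NsCount D s := by exact_mod_cast hnspos
    have hns1 : (1:ℝ) ≤ (NsCount D s : ℝ) := by exact_mod_cast hNsnat
    have hpihat : ∀ a' : A, pihat πmin' D s a'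
        = max πmin' ((NsaCount D s a' : ℝ) / (NsCount D s : ℝ)) := by
      intro a'
      unfold pihat
      rw [max_eq_right hns1]
    rw [if_pos hNsnat]
    -- ratio bounds
    have hqpos : ∀ a' : A, 0 < πE s a' := fun a' => lt_of_lt_of_le hπmin' (hlb s a')
    have hf2 : ∀ a' : A, pihat πmin' D s a' ≤ πE s a' * ((1+c)/(1-c)) := by
      intro a'
      rw [hpihat a']
      apply max_le
      · calc πmin' ≤ πE s a' := hlb s a'
          _ ≤ πE s a' * ((1+c)/(1-c)) := by
            nth_rewrite 1 [← mul_one (πE s a')]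
            apply mul_le_mul_of_nonneg_left _ (hqpos a').le
            rw [le_div_iff₀ h1c]
            linarith
      · have hd : (NsaCount D s a' : ℝ) / (NsCount D s : ℝ)
            ≤ ((1+c) * ((N:ℝ) * (πE s a' * v))) / ((1-c) * ((N:ℝ) * v)) := by
          apply div_le_div₀
            (mul_nonneg h1c'.le (mul_nonneg hN0.le
              (mul_nonneg (hqpos a').le (hvpos s).le)))
            (hnsa_hi a').le
            (mul_pos h1c (mul_pos hN0 (hvpos s))) hns_lo.le
        have hNv : ((N:ℝ) * v) ≠ 0 := (mul_pos hN0 (hvpos s)).ne'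
        have heq : ((1+c) * ((N:ℝ) * (πE s a' * v))) / ((1-c) * ((N:ℝ) * v))
            = πE s a' * ((1+c)/(1-c)) := by
          rw [show (1+c) * ((N:ℝ) * (πE s a' * v)) = ((1+c) * πE s a') * ((N:ℝ) * v) from by
            ring]
          rw [mul_div_mul_right _ _ hNv]
          rw [mul_comm (1+c) (πE s a'), mul_div_assoc]
        rw [heq] at hd
        exact hd
    have hf1 : ∀ a' : A, πE s a' / ((1+c)/(1-c)) ≤ pihat πmin' D s a' := by
      intro a'
      rw [hpihat a']
      have hd : ((1-c) * ((N:ℝ) * (πE s a' * v))) / ((1+c) * ((N:ℝ) * v))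
          ≤ (NsaCount D s a' : ℝ) / (NsCount D s : ℝ) := by
        apply div_le_div₀ (Nat.cast_nonneg _) (hnsa_lo a').le hnspos hns_hi.le
      have hNv : ((N:ℝ) * v) ≠ 0 := (mul_pos hN0 (hvpos s)).ne'
      have heq : ((1-c) * ((N:ℝ) * (πE s a' * v))) / ((1+c) * ((N:ℝ) * v))
          = πE s a' / ((1+c)/(1-c)) := by
        rw [show (1-c) * ((N:ℝ) * (πE s a' * v)) = ((1-c) * πE s a') * ((N:ℝ) * v) from by
          ring]
        rw [mul_div_mul_right _ _ hNv]
        rw [div_div_eq_mul_div, mul_comm (1-c) (πE s a'), mul_div_assoc]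
      calc πE s a' / ((1+c)/(1-c))
          = ((1-c) * ((N:ℝ) * (πE s a' * v))) / ((1+c) * ((N:ℝ) * v)) := heq.symm
        _ ≤ (NsaCount D s a' : ℝ) / (NsCount D s : ℝ) := hd
        _ ≤ max πmin' ((NsaCount D s a' : ℝ) / (NsCount D s : ℝ)) := le_max_right _ _
    have hfmin : ∀ a' : A, πmin' ≤ pihat πmin' D s a' := by
      intro a'
      rw [hpihat a']
      exact le_max_left _ _
    exact det_bound hc0 hc5 hπmin' hc (πE s) (hlb s)
      (fun a' => pihat πmin' D s a') hfmin hf1 hf2 a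
  -- conclusion
  calc 1 - δ ≤ 1 - PrD M πE Bad := by linarith
    _ = PrD M πE Badᶜ := (PrD_compl M hπE hH0 Bad).symm
    _ ≤ _ := PrD_mono M hπE hincl
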